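/- arXiv:2108.05812 — 6 statements merged into one kernel-verified Lean document; each statement's English description precedes it below -/
import Mathlib

section
/- Let I be a stable monomial ideal in the skew polynomial ring R = k_q[x_1,…,x_n]. Then every monomial w ∈ I can be written uniquely as w = u * y, where u ∈ G(I), y is a monomial, and max(u) ≤ min(y) (the canonical decomposition of w). -/
open Finsupp

/-- Exponent vectors of monomials in `n` variables. -/
abbrev NExp (n : ℕ) := Fin n →₀ ℕ

/-- Integer exponent vectors (for Laurent-type arguments of the bicharacter `C`). -/
abbrev ZExp (n : ℕ) := Fin n →₀ ℤ

/-- Canonical inclusion of `ℕ`-exponent vectors into `ℤ`-exponent vectors. -/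
noncomputable def zc {n : ℕ} (a : NExp n) : ZExp n := Finsupp.mapRange (fun (m : ℕ) => (m : ℤ)) (by simp) a

/-- Total degree of a monomial. -/
def wdeg {n : ℕ} (a : NExp n) : ℕ := a.sum fun _ e => e

/-- `maxIdx a` is the 1-based index of the largest variable occurring in `x^a`
(`0` if `a = 0`, i.e. for the monomial `1`). -/
def maxIdx {n : ℕ} (a : NExp n) : ℕ := a.support.sup fun i => (i : ℕ) + 1

/-- `max(u) ≤ min(y)`: every variable occurring in `y` has (1-based) index at least
`maxIdx u`.  (This is vacuously true when `y = 0`, matching `min(1) = +∞`.) -/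
def maxLeMin {n : ℕ} (u y : NExp n) : Prop := ∀ j ∈ y.support, maxIdx u ≤ (j : ℕ) + 1

/-- Data exhibiting the ring `R` as the skew polynomial ring `k_q[x_1,…,x_n]`:
the monomials `x^a` form a `k`-basis, multiply according to the alternating
bicharacter `C`, and `C` is induced by the defining constants `q i j` with
`x_i x_j = q i j • (x_j x_i)`. -/
structure SkewPoly (k R : Type*) [CommRing k] [Ring R] [Algebra k R] (n : ℕ) : Type _ where
  /-- the monomial `x^a` -/
  mon : NExp n → R
  /-- the bicharacter `C`, defined by `x^a x^b = C(x^a,x^b) x^{a+b}` -/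
  C : ZExp n → ZExp n → kˣ
  /-- the defining constants `q_{i,j}` -/
  q : Fin n → Fin n → kˣ
  q_diag : ∀ i, q i i = 1
  q_symm : ∀ i j, q j i = (q i j)⁻¹
  /-- the monomials form a `k`-basis of `R` -/
  basis : Module.Basis (NExp n) k R
  basis_eq : ∀ a, basis a = mon a
  mon_zero : mon 0 = 1
  mon_mul : ∀ a b, mon a * mon b = ((C (zc a) (zc b) : kˣ) : k) • mon (a + b)
  C_add_left : ∀ a b c, C (a + b) c = C a c * C b c
  C_add_right : ∀ a b c, C a (b + c) = C a b * C a c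
  C_single : ∀ i j : Fin n,
    C (Finsupp.single i 1) (Finsupp.single j 1) = if j < i then q i j else 1

namespace SkewPoly

variable {k R : Type*} [CommRing k] [Ring R] [Algebra k R] {n : ℕ}

/-- The bicharacter `χ(a,b) = C(a,b)/C(b,a)`, so that `x^a x^b = χ(x^a,x^b) x^b x^a`. -/
def chi (S : SkewPoly k R n) (a b : ZExp n) : kˣ := S.C a b * (S.C b a)⁻¹

/-- The set of exponent vectors of the monomials lying in the right ideal `I`. -/
def monSet (S : SkewPoly k R n) (I : Submodule Rᵐᵒᵖ R) : Set (NExp n) :=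
  {w | S.mon w ∈ I}

/-- `I` is a monomial (right) ideal: it is generated by a set of monomials. -/
def IsMonomialIdeal (S : SkewPoly k R n) (I : Submodule Rᵐᵒᵖ R) : Prop :=
  ∃ T : Set (NExp n), I = Submodule.span Rᵐᵒᵖ (S.mon '' T)

/-- `I` is stable: for every monomial `w ∈ I` and every index `i < max(w)`,
the monomial `(x_i * w)/x_{max(w)}` lies in `I`. -/
def IsStable (S : SkewPoly k R n) (I : Submodule Rᵐᵒᵖ R) : Prop :=
  ∀ w ∈ S.monSet I, ∀ i m : Fin n, (m : ℕ) + 1 = maxIdx w → i < m →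
    w + Finsupp.single i 1 - Finsupp.single m 1 ∈ S.monSet I

/-- The canonical (minimal) monomial generating set `G(I)`: monomials of `I` that are
not proper multiples of other monomials of `I`. -/
def G (S : SkewPoly k R n) (I : Submodule Rᵐᵒᵖ R) : Set (NExp n) :=
  {u | u ∈ S.monSet I ∧ ∀ v ∈ S.monSet I, v ≤ u → v = u}

/-- `g` is the decomposition function of the stable ideal `I`: it sends a monomial
`w ∈ I` to the generator `u ∈ G(I)` of its canonical decomposition `w = u * y`,
`max(u) ≤ min(y)`. -/
def IsDecompFun (S : SkewPoly k R n) (I : Submodule Rᵐᵒᵖ R)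
    (g : NExp n → NExp n) : Prop :=
  ∀ w ∈ S.monSet I, g w ∈ S.G I ∧ g w ≤ w ∧ maxLeMin (g w) (w - g w)

end SkewPoly

section Statements

open Finsupp

variable {k R : Type*} [CommRing k] [Ring R] [Algebra k R] {n : ℕ}


section AuxL

variable {n : ℕ}

lemma wdeg_add (a b : NExp n) : wdeg (a + b) = wdeg a + wdeg b := by
  unfold wdeg; exact Finsupp.sum_add_index' (fun _ => rfl) (fun _ _ _ => rfl)

lemma wdeg_single (i : Fin n) : wdeg (Finsupp.single i 1) = 1 := by
  unfold wdeg; simp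

lemma eq_of_le_of_wdeg {a b : NExp n} (h : a ≤ b) (hw : wdeg b ≤ wdeg a) : a = b := by
  have h1 : a + (b - a) = b := add_tsub_cancel_of_le h
  have h2 : wdeg a + wdeg (b - a) = wdeg b := by rw [← wdeg_add, h1]
  have h3 : wdeg (b - a) = 0 := by omega
  have h4 : b - a = 0 := by
    by_contra hne
    obtain ⟨i, hi⟩ := Finsupp.ne_iff.1 hne
    simp only [Finsupp.coe_zero, Pi.zero_apply] at hi
    have : (b - a) i ≤ wdeg (b - a) := by
      unfold wdeg Finsupp.sum
      exact Finset.single_le_sum (fun j _ => Nat.zero_le _)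
        (Finsupp.mem_support_iff.2 hi)
    omega
  rw [← h1, h4, add_zero]

def mu {n : ℕ} (y : NExp n) : ℕ := ∑ i : Fin n, y i * (n - (i : ℕ))

lemma mu_add (a b : NExp n) : mu (a + b) = mu a + mu b := by
  unfold mu; simp [add_mul, Finset.sum_add_distrib]

lemma mu_single (i : Fin n) : mu (Finsupp.single i 1) = n - (i : ℕ) := by
  unfold mu
  rw [Finset.sum_eq_single i]
  · simp
  · intro j _ hj; simp [Finsupp.single_apply, Ne.symm hj]
  · simp

lemma maxIdx_attained {u : NExp n} (h : maxIdx u ≠ 0) :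
    ∃ m ∈ u.support, (m : ℕ) + 1 = maxIdx u := by
  have hne : u.support.Nonempty := by
    by_contra hc
    rw [Finset.not_nonempty_iff_eq_empty] at hc
    unfold maxIdx at h; rw [hc] at h; simp at h
  obtain ⟨m, hm, hvm⟩ := Finset.exists_mem_eq_sup u.support hne fun i => (i : ℕ) + 1
  exact ⟨m, hm, hvm.symm⟩

lemma mem_supp_le_maxIdx {u : NExp n} {i : Fin n} (h : i ∈ u.support) :
    (i : ℕ) + 1 ≤ maxIdx u := Finset.le_sup (f := fun i : Fin n => (i : ℕ) + 1) h

end AuxL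

section SkewAux
open MulOpposite
variable {k R : Type*} [CommRing k] [Ring R] [Algebra k R] {n : ℕ}

lemma ksmul_mem (I : Submodule Rᵐᵒᵖ R) (c : k) {x : R} (hx : x ∈ I) : c • x ∈ I := by
  have : c • x = x * algebraMap k R c := by
    rw [Algebra.smul_def, Algebra.commutes]
  rw [this]
  simpa using I.smul_mem (op (algebraMap k R c)) hx

lemma mem_monSet_add (S : SkewPoly k R n) (I : Submodule Rᵐᵒᵖ R) {u : NExp n}
    (h : u ∈ S.monSet I) (y : NExp n) : u + y ∈ S.monSet I := by
  have h1 : S.mon u * S.mon y ∈ I := by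
    simpa using I.smul_mem (op (S.mon y)) h
  have h2 : S.mon (u + y) = ((((S.C (zc u) (zc y))⁻¹ : kˣ) : k)) • (S.mon u * S.mon y) := by
    rw [S.mon_mul, smul_smul]
    simp
  show S.mon (u + y) ∈ I
  rw [h2]
  exact ksmul_mem I _ h1

/-- The key reduction: starting from any factorization `u * y` with `u ∈ I`,
stability lets us produce a factorization with `max ≤ min`, preserving `wdeg u`. -/
lemma reduce (S : SkewPoly k R n) (I : Submodule Rᵐᵒᵖ R) (hstab : S.IsStable I) :
    ∀ N y u, mu y ≤ N → u ∈ S.monSet I →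
    ∃ u' y', u' ∈ S.monSet I ∧ u' + y' = u + y ∧ wdeg u' = wdeg u ∧ maxLeMin u' y' := by
  intro N
  induction N with
  | zero =>
    intro y u hmu hu
    refine ⟨u, y, hu, rfl, rfl, ?_⟩
    intro j hj
    by_contra hc
    have hyj : 1 ≤ y j := Finsupp.mem_support_iff.1 hj |>.bot_lt
    have hjn : (j : ℕ) < n := j.isLt
    have : y j * (n - (j : ℕ)) ≤ mu y := by
      unfold mu
      exact Finset.single_le_sum (f := fun i : Fin n => y i * (n - (i : ℕ)))
        (fun i _ => Nat.zero_le _) (Finset.mem_univ j)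
    nlinarith [Nat.sub_pos_of_lt hjn]
  | succ N ih =>
    intro y u hmu hu
    by_cases hml : maxLeMin u y
    · exact ⟨u, y, hu, rfl, rfl, hml⟩
    · simp only [maxLeMin, not_forall] at hml
      obtain ⟨j, hj, hjlt⟩ := hml
      push_neg at hjlt
      obtain ⟨m, hm, hmeq⟩ := maxIdx_attained (u := u) (by omega)
      have hjm : j < m := by
        rw [Fin.lt_def]; omega
      set u' := u + Finsupp.single j 1 - Finsupp.single m 1 with hu'
      have hu'mem : u' ∈ S.monSet I := hstab u hu j m hmeq hjm
      have hmne : m ≠ j := hjm.ne'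
      have hkey : u' + Finsupp.single m 1 = u + Finsupp.single j 1 := by
        apply tsub_add_cancel_of_le
        refine Finsupp.le_def.2 fun i => ?_
        rcases eq_or_ne i m with rfl | him
        · have : 1 ≤ u i := Finsupp.mem_support_iff.1 hm |>.bot_lt
          simp [Finsupp.single_apply]
          omega
        · simp [Finsupp.single_apply, Ne.symm him]
      set y' := y + Finsupp.single m 1 - Finsupp.single j 1 with hy'
      have hkey2 : y' + Finsupp.single j 1 = y + Finsupp.single m 1 := by
        apply tsub_add_cancel_of_le
        refine Finsupp.le_def.2 fun i => ?_
        rcases eq_or_ne i j with rfl | hij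
        · have : 1 ≤ y i := Finsupp.mem_support_iff.1 hj |>.bot_lt
          simp [Finsupp.single_apply]
          omega
        · simp [Finsupp.single_apply, Ne.symm hij]
      have hsum : u' + y' = u + y := by
        have : (u' + y') + (Finsupp.single m 1 + Finsupp.single j 1)
            = (u + y) + (Finsupp.single m 1 + Finsupp.single j 1) := by
          calc (u' + y') + (Finsupp.single m 1 + Finsupp.single j 1)
              = (u' + Finsupp.single m 1) + (y' + Finsupp.single j 1) := by abel
            _ = (u + Finsupp.single j 1) + (y + Finsupp.single m 1) := by rw [hkey, hkey2]
            _ = (u + y) + (Finsupp.single m 1 + Finsupp.single j 1) := by abel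
        exact add_right_cancel this
      have hwdeg : wdeg u' = wdeg u := by
        have := congrArg wdeg hkey
        rw [wdeg_add, wdeg_add, wdeg_single, wdeg_single] at this
        omega
      have hmun : mu y' < mu y := by
        have := congrArg mu hkey2
        rw [mu_add, mu_add, mu_single, mu_single] at this
        have h1 : (j : ℕ) < (m : ℕ) := hjm
        have h2 : (m : ℕ) < n := m.isLt
        omega
      obtain ⟨u'', y'', h1, h2, h3, h4⟩ := ih y' u' (by omega) hu'mem
      exact ⟨u'', y'', h1, by rw [h2, hsum], by rw [h3, hwdeg], h4⟩

lemma le_or_le (S : SkewPoly k R n) (I : Submodule Rᵐᵒᵖ R)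
    {u1 y1 u2 y2 : NExp n} (hsum : u1 + y1 = u2 + y2)
    (hml1 : maxLeMin u1 y1) (hml2 : maxLeMin u2 y2) : u1 ≤ u2 ∨ u2 ≤ u1 := by
  -- helper claim
  have claim : ∀ (a b c d : NExp n), a + b = c + d → maxLeMin c d →
      maxIdx a ≤ maxIdx c → (∀ i : Fin n, (i : ℕ) + 1 = maxIdx c → a i ≤ c i) → a ≤ c := by
    intro a b c d heq hml hle hcrit
    refine Finsupp.le_def.2 fun i => ?_
    rcases Nat.eq_zero_or_pos (a i) with h0 | hpos
    · omega
    · have hi : i ∈ a.support := Finsupp.mem_support_iff.2 (by omega)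
      have h1 : (i : ℕ) + 1 ≤ maxIdx a := mem_supp_le_maxIdx hi
      rcases eq_or_lt_of_le (le_trans h1 hle) with heq2 | hlt2
      · exact hcrit i heq2
      · have hd : d i = 0 := by
          by_contra hc
          have := hml i (Finsupp.mem_support_iff.2 hc)
          omega
        have h2 := DFunLike.congr_fun heq i
        simp only [Finsupp.coe_add, Pi.add_apply] at h2
        omega
  rcases le_or_gt (maxIdx u1) (maxIdx u2) with hle | hlt
  · rcases eq_or_lt_of_le hle with heq | hlt1
    · -- equal maxIdx: compare at critical index
      by_cases hc : ∀ i : Fin n, (i : ℕ) + 1 = maxIdx u2 → u1 i ≤ u2 i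
      · exact Or.inl (claim u1 y1 u2 y2 hsum hml2 hle hc)
      · push_neg at hc
        obtain ⟨i0, hi0, hgt⟩ := hc
        refine Or.inr (claim u2 y2 u1 y1 hsum.symm hml1 heq.ge fun i hi => ?_)
        have : i = i0 := by
          have : (i : ℕ) = (i0 : ℕ) := by omega
          exact Fin.ext this
        subst this
        omega
    · refine Or.inl (claim u1 y1 u2 y2 hsum hml2 hle fun i hi => ?_)
      have : u1 i = 0 := by
        by_contra hc
        have := mem_supp_le_maxIdx (Finsupp.mem_support_iff.2 hc)
        omega
      omega
  · refine Or.inr (claim u2 y2 u1 y1 hsum.symm hml1 hlt.le fun i hi => ?_)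
    have : u2 i = 0 := by
      by_contra hc
      have := mem_supp_le_maxIdx (u := u2) (Finsupp.mem_support_iff.2 hc)
      omega
    omega

end SkewAux

theorem stmt0 [IsNoetherianRing k]
    (S : SkewPoly k R n) (I : Submodule Rᵐᵒᵖ R)
    (hmono : S.IsMonomialIdeal I) (hstab : S.IsStable I) :
    ∀ w ∈ S.monSet I, ∃! p : NExp n × NExp n,
      p.1 ∈ S.G I ∧ w = p.1 + p.2 ∧ maxLeMin p.1 p.2 := by
  intro w hw
  classical
  -- Existence
  set P : ℕ → Prop := fun d => ∃ u y, u ∈ S.monSet I ∧ u + y = w ∧ maxLeMin u y ∧ wdeg u = d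
    with hP
  have hPex : ∃ d, P d := by
    obtain ⟨u, y, h1, h2, h3, h4⟩ := reduce S I hstab (mu 0) 0 w le_rfl hw
    exact ⟨wdeg u, u, y, h1, by simpa using h2, h4, rfl⟩
  obtain ⟨u, y, hu, huy, hml, hwd⟩ := Nat.find_spec hPex
  have huG : u ∈ S.G I := by
    refine ⟨hu, fun v hv hvu => ?_⟩
    have hvw : v ≤ w := le_trans hvu (huy ▸ le_add_right le_rfl)
    obtain ⟨v', y', h1, h2, h3, h4⟩ := reduce S I hstab (mu (w - v)) (w - v) v le_rfl hv
    have : P (wdeg v) := ⟨v', y', h1, by rw [h2, add_tsub_cancel_of_le hvw], h4, h3⟩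
    have hfind := Nat.find_min' hPex this
    have hwv : wdeg v ≤ wdeg u := by
      have h1' : v + (u - v) = u := add_tsub_cancel_of_le hvu
      have := congrArg wdeg h1'
      rw [wdeg_add] at this
      omega
    exact eq_of_le_of_wdeg hvu (by omega)
  refine ⟨(u, y), ⟨huG, huy.symm, hml⟩, ?_⟩
  rintro ⟨u2, y2⟩ ⟨hG2, heq2, hml2⟩
  simp only at hG2 heq2 hml2 ⊢
  have hsum : u2 + y2 = u + y := by rw [← heq2, huy]
  have hueq : u2 = u := by
    rcases le_or_le S I hsum hml2 hml with h | h
    · exact huG.2 u2 hG2.1 h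
    · exact (hG2.2 u hu h).symm
  subst hueq
  have : y2 = y := add_left_cancel hsum
  subst this
  rfl

end Statements
end

section
/- Let I be a stable monomial ideal in the skew polynomial ring R, let w be a monomial in I, and let v be any monomial of R. Then g(v * w) = g(w) if and only if max(g(w)) ≤ min(v). -/
open Finsupp

section Statements

open Finsupp

variable {k R : Type*} [CommRing k] [Ring R] [Algebra k R] {n : ℕ}


lemma aux_k_smul_mem (I : Submodule Rᵐᵒᵖ R) (c : k) {r : R} (hr : r ∈ I) :
    c • r ∈ I := by
  have : c • r = (MulOpposite.op (algebraMap k R c)) • r := by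
    simp [Algebra.smul_def, Algebra.commutes, op_smul_eq_mul]
  rw [this]
  exact I.smul_mem _ hr

lemma aux_mem_of_unit_smul (I : Submodule Rᵐᵒᵖ R) (u : kˣ) {r : R}
    (h : (u : k) • r ∈ I) : r ∈ I := by
  have := aux_k_smul_mem I ((u⁻¹ : kˣ) : k) h
  rwa [smul_smul, Units.inv_mul, one_smul] at this

lemma aux_monSet_add (S : SkewPoly k R n) (I : Submodule Rᵐᵒᵖ R) {w : NExp n}
    (hw : w ∈ S.monSet I) (v : NExp n) : v + w ∈ S.monSet I := by
  have h1 : (MulOpposite.op (S.mon v)) • S.mon w ∈ I := I.smul_mem _ hw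
  rw [op_smul_eq_mul, S.mon_mul] at h1
  have h2 : S.mon (w + v) ∈ I := aux_mem_of_unit_smul I _ h1
  show S.mon (v + w) ∈ I
  rwa [add_comm]

lemma aux_le_maxIdx {a : NExp n} {j : Fin n} (h : a j ≠ 0) :
    (j : ℕ) + 1 ≤ maxIdx a :=
  Finset.le_sup (f := fun i : Fin n => (i : ℕ) + 1) (Finsupp.mem_support_iff.mpr h)

lemma aux_decomp_uniq (S : SkewPoly k R n) (I : Submodule Rᵐᵒᵖ R)
    {u1 u2 z : NExp n} (h1 : u1 ∈ S.G I) (h2 : u2 ∈ S.G I)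
    (hle1 : u1 ≤ z) (hle2 : u2 ≤ z)
    (hm1 : maxLeMin u1 (z - u1)) (hm2 : maxLeMin u2 (z - u2)) : u1 = u2 := by
  by_cases h12 : u1 ≤ u2
  · exact h2.2 u1 h1.1 h12
  by_cases h21 : u2 ≤ u1
  · exact (h1.2 u2 h2.1 h21).symm
  exfalso
  rw [Finsupp.le_def] at h12 h21
  push_neg at h12 h21
  obtain ⟨j, hj⟩ := h12   -- u2 j < u1 j
  obtain ⟨j', hj'⟩ := h21 -- u1 j' < u2 j'
  have hz1 : (z - u1) j' ≠ 0 := by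
    have hz : u2 j' ≤ z j' := Finsupp.le_def.mp hle2 j'
    have : (z - u1) j' = z j' - u1 j' := Finsupp.tsub_apply z u1 j'
    omega
  have hz2 : (z - u2) j ≠ 0 := by
    have hz : u1 j ≤ z j := Finsupp.le_def.mp hle1 j
    have : (z - u2) j = z j - u2 j := Finsupp.tsub_apply z u2 j
    omega
  have hA : maxIdx u1 ≤ (j' : ℕ) + 1 := hm1 j' (Finsupp.mem_support_iff.mpr hz1)
  have hB : maxIdx u2 ≤ (j : ℕ) + 1 := hm2 j (Finsupp.mem_support_iff.mpr hz2)
  have hC : (j : ℕ) + 1 ≤ maxIdx u1 := aux_le_maxIdx (by omega)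
  have hD : (j' : ℕ) + 1 ≤ maxIdx u2 := aux_le_maxIdx (by omega)
  have : j = j' := Fin.ext (by omega)
  subst this
  omega

theorem stmt1 [IsNoetherianRing k]
    (S : SkewPoly k R n) (I : Submodule Rᵐᵒᵖ R)
    (hmono : S.IsMonomialIdeal I) (hstab : S.IsStable I)
    (g : NExp n → NExp n) (hg : S.IsDecompFun I g) :
    ∀ w ∈ S.monSet I, ∀ v : NExp n, g (v + w) = g w ↔ maxLeMin (g w) v := by
  intro w hw v
  have hvw := aux_monSet_add S I hw v
  obtain ⟨hG, hle, hmax⟩ := hg w hw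
  obtain ⟨hG', hle', hmax'⟩ := hg (v + w) hvw
  constructor
  · intro heq j hjv
    rw [heq] at hmax'
    apply hmax' j
    rw [Finsupp.mem_support_iff] at hjv ⊢
    have h1 : (v + w - g w) j = (v + w) j - g w j := Finsupp.tsub_apply _ _ j
    have h2 : (v + w) j = v j + w j := Finsupp.add_apply v w j
    have h3 : g w j ≤ w j := Finsupp.le_def.mp hle j
    omega
  · intro hv
    refine aux_decomp_uniq S I hG' hG hle' (le_trans hle ?_) hmax' ?_
    · exact le_add_self
    · intro j hj
      rw [Finsupp.mem_support_iff] at hj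
      have h1 : (v + w - g w) j = (v + w) j - g w j := Finsupp.tsub_apply _ _ j
      have h2 : (v + w) j = v j + w j := Finsupp.add_apply v w j
      by_cases hvj : v j = 0
      · apply hmax j
        rw [Finsupp.mem_support_iff]
        have h3 : (w - g w) j = w j - g w j := Finsupp.tsub_apply _ _ j
        omega
      · exact hv j (Finsupp.mem_support_iff.mpr hvj)


end Statements
end

section
/- Let I be a stable monomial ideal in the skew polynomial ring R, let w be a monomial in I, and let v be any monomial of R. Then g(v * g(w)) = g(v * w). -/
open Finsupp

section Statements

open Finsupp

variable {k R : Type*} [CommRing k] [Ring R] [Algebra k R] {n : ℕ}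

lemma le_maxIdx {a : NExp n} {j : Fin n} (hj : j ∈ a.support) :
    (j : ℕ) + 1 ≤ maxIdx a :=
  Finset.le_sup (f := fun i : Fin n => (i : ℕ) + 1) hj

lemma maxIdx_mono {a b : NExp n} (h : a ≤ b) : maxIdx a ≤ maxIdx b := by
  apply Finset.sup_mono
  intro j hj
  rw [Finsupp.mem_support_iff] at hj ⊢
  have := (Finsupp.le_def.mp h) j
  omega

lemma maxIdx_single_add {i : Fin n} {b : ℕ} {u : NExp n} :
    maxIdx (Finsupp.single i b + u) ≤ max ((i : ℕ) + 1) (maxIdx u) := by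
  apply Finset.sup_le
  intro j hj
  rcases Finset.mem_union.mp (Finsupp.support_add hj) with h1 | h2
  · have : j = i := Finset.mem_singleton.mp (Finsupp.support_single_subset h1)
    subst this
    exact le_max_left _ _
  · exact le_trans (le_maxIdx h2) (le_max_right _ _)

lemma monSet_add (S : SkewPoly k R n) (I : Submodule Rᵐᵒᵖ R) {w : NExp n}
    (hw : w ∈ S.monSet I) (v : NExp n) : w + v ∈ S.monSet I := by
  have hmul : S.mon w * S.mon v ∈ I := by
    have : S.mon w * S.mon v = MulOpposite.op (S.mon v) • S.mon w := rfl
    rw [this]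
    exact Submodule.smul_mem I _ hw
  have h2 : ((S.C (zc w) (zc v) : kˣ) : k) • S.mon (w + v) ∈ I := by
    rw [← S.mon_mul]; exact hmul
  have h3 : S.mon (w + v) =
      (((S.C (zc w) (zc v))⁻¹ : kˣ) : k) • (((S.C (zc w) (zc v) : kˣ) : k) • S.mon (w + v)) := by
    rw [smul_smul, ← Units.val_mul, inv_mul_cancel, Units.val_one, one_smul]
  show S.mon (w + v) ∈ I
  rw [h3]
  set c : k := (((S.C (zc w) (zc v))⁻¹ : kˣ) : k)
  set x : R := ((S.C (zc w) (zc v) : kˣ) : k) • S.mon (w + v)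
  have : c • x = MulOpposite.op (algebraMap k R c) • x := by
    show c • x = x * algebraMap k R c
    rw [← Algebra.commutes, ← Algebra.smul_def]
  rw [this]
  exact Submodule.smul_mem I _ h2

private lemma aux_le {a b y y' : NExp n}
    (h : a + y = b + y') (hb : maxLeMin b y')
    (hm : maxIdx a ≤ maxIdx b)
    (htop : ∀ j : Fin n, (j : ℕ) + 1 = maxIdx b → a j ≤ b j) :
    a ≤ b := by
  rw [Finsupp.le_def]
  intro j
  have hj := DFunLike.congr_fun h j
  simp only [Finsupp.add_apply] at hj
  rcases lt_trichotomy ((j : ℕ) + 1) (maxIdx b) with h1 | h2 | h3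
  · have hy' : y' j = 0 := by
      by_contra hne
      exact absurd (hb j (Finsupp.mem_support_iff.mpr hne)) (by omega)
    omega
  · exact htop j h2
  · have ha0 : a j = 0 := by
      by_contra hne
      have := le_maxIdx (Finsupp.mem_support_iff.mpr hne)
      omega
    omega

private lemma le_or_le_s2 {a b y y' : NExp n}
    (h : a + y = b + y') (ha : maxLeMin a y) (hb : maxLeMin b y') :
    a ≤ b ∨ b ≤ a := by
  rcases lt_trichotomy (maxIdx a) (maxIdx b) with hlt | heq | hgt
  · refine Or.inl (aux_le h hb hlt.le fun j hj => ?_)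
    have ha0 : a j = 0 := by
      by_contra hne
      have := le_maxIdx (Finsupp.mem_support_iff.mpr hne)
      omega
    omega
  · by_cases htop : ∀ j : Fin n, (j : ℕ) + 1 = maxIdx b → a j ≤ b j
    · exact Or.inl (aux_le h hb heq.le htop)
    · push_neg at htop
      obtain ⟨j, hj1, hj2⟩ := htop
      refine Or.inr (aux_le h.symm ha heq.ge fun j' hj' => ?_)
      have : j' = j := Fin.val_injective (by omega)
      subst this
      exact hj2.le
  · refine Or.inr (aux_le h.symm ha hgt.le fun j hj => ?_)
    have hb0 : b j = 0 := by
      by_contra hne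
      have := le_maxIdx (Finsupp.mem_support_iff.mpr hne)
      omega
    omega

lemma decomp_unique (S : SkewPoly k R n) (I : Submodule Rᵐᵒᵖ R)
    (g : NExp n → NExp n) (hg : S.IsDecompFun I g) {w u y : NExp n}
    (hu : u ∈ S.G I) (hdecomp : w = u + y) (hmm : maxLeMin u y)
    (hw : w ∈ S.monSet I) : g w = u := by
  obtain ⟨hgG, hgle, hgmax⟩ := hg w hw
  have heq : u + y = g w + (w - g w) := by
    rw [← hdecomp, add_tsub_cancel_of_le hgle]
  rcases le_or_le_s2 heq hmm hgmax with h1 | h2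
  · exact (hgG.2 u hu.1 h1).symm
  · exact hu.2 (g w) hgG.1 h2

lemma g_step (S : SkewPoly k R n) (I : Submodule Rᵐᵒᵖ R)
    (g : NExp n → NExp n) (hg : S.IsDecompFun I g) (i : Fin n) (b : ℕ)
    {w : NExp n} (hw : w ∈ S.monSet I) :
    g (Finsupp.single i b + w) = g (Finsupp.single i b + g w) := by
  obtain ⟨hgG, hgle, hgmax⟩ := hg w hw
  have huM : g w ∈ S.monSet I := hgG.1
  have hsuM : Finsupp.single i b + g w ∈ S.monSet I := by
    rw [add_comm]; exact monSet_add S I huM _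
  obtain ⟨huG', hule', hmax'⟩ := hg _ hsuM
  have hkey : maxIdx (g (Finsupp.single i b + g w)) ≤ maxIdx (g w) := by
    rcases le_or_gt ((i : ℕ) + 1) (maxIdx (g w)) with hle | hgt
    · calc maxIdx (g (Finsupp.single i b + g w))
          ≤ maxIdx (Finsupp.single i b + g w) := maxIdx_mono hule'
        _ ≤ max ((i : ℕ) + 1) (maxIdx (g w)) := maxIdx_single_add
        _ = maxIdx (g w) := max_eq_right hle
    · have heq : g (Finsupp.single i b + g w) = g w := by
        refine decomp_unique S I g hg hgG (add_comm _ _) ?_ hsuM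
        intro j hj
        have : j = i := Finset.mem_singleton.mp (Finsupp.support_single_subset hj)
        subst this
        omega
      rw [heq]
  have hwM : Finsupp.single i b + w ∈ S.monSet I := by
    rw [add_comm]; exact monSet_add S I hw _
  refine decomp_unique S I g hg huG'
    (y := (Finsupp.single i b + g w - g (Finsupp.single i b + g w)) + (w - g w)) ?_ ?_ hwM
  · rw [← add_assoc, add_tsub_cancel_of_le hule', add_assoc,
      add_tsub_cancel_of_le hgle]
  · intro j hj
    rcases Finset.mem_union.mp (Finsupp.support_add hj) with h1 | h2
    · exact hmax' j h1
    · exact le_trans hkey (hgmax j h2)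

theorem stmt2 [IsNoetherianRing k]
    (S : SkewPoly k R n) (I : Submodule Rᵐᵒᵖ R)
    (hmono : S.IsMonomialIdeal I) (hstab : S.IsStable I)
    (g : NExp n → NExp n) (hg : S.IsDecompFun I g) :
    ∀ w ∈ S.monSet I, ∀ v : NExp n, g (v + g w) = g (v + w) := by
  intro w hw v
  induction v using Finsupp.induction with
  | zero =>
    simp only [zero_add]
    obtain ⟨hgG, hgle, hgmax⟩ := hg w hw
    exact decomp_unique S I g hg hgG (add_zero _).symm
      (fun j hj => by simp at hj) hgG.1
  | single_add i b f _ _ ih =>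
    have hfw : f + w ∈ S.monSet I := by rw [add_comm]; exact monSet_add S I hw f
    have hgwM : g w ∈ S.monSet I := (hg w hw).1.1
    have hfgw : f + g w ∈ S.monSet I := by rw [add_comm]; exact monSet_add S I hgwM f
    calc g (Finsupp.single i b + f + g w)
        = g (Finsupp.single i b + (f + g w)) := by rw [add_assoc]
      _ = g (Finsupp.single i b + g (f + g w)) := g_step S I g hg i b hfgw
      _ = g (Finsupp.single i b + g (f + w)) := by rw [ih]
      _ = g (Finsupp.single i b + (f + w)) := (g_step S I g hg i b hfw).symm
      _ = g (Finsupp.single i b + f + w) := by rw [add_assoc]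

end Statements
end

section
/- Let I be a stable monomial ideal in the skew polynomial ring R. The map D on the complex K_•(I) of free right R-modules satisfies D ∘ D = 0, so (K_•(I), D) is a complex. -/
open Finsupp

section Complex

open Finsupp

/-- Symbols `e(i_1,…,i_q; u)`: a list of variable indices together with a monomial. -/
abbrev EKSym (n : ℕ) := List (Fin n) × NExp n

/-- The exponent vector of `x_σ = x_{i_1} ⋯ x_{i_q}`. -/
noncomputable def listMon {n : ℕ} (σ : List (Fin n)) : NExp n :=
  (σ.map fun i => Finsupp.single i 1).sum

variable {k R : Type*} [CommRing k] [Ring R] [Algebra k R] {n : ℕ}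

/-- Right action of `R` on the free right `R`-module `EKSym n →₀ R`. -/
noncomputable def rmul (f : EKSym n →₀ R) (r : R) : EKSym n →₀ R :=
  f.mapRange (· * r) (zero_mul r)

/-- A symbol `e(i_1,…,i_q;u)` is admissible for `I` when `u ∈ G(I)` and
`1 ≤ i_1 < ⋯ < i_q < max(u)`. -/
def Adm (S : SkewPoly k R n) (I : Submodule Rᵐᵒᵖ R) (s : EKSym n) : Prop :=
  s.1.Pairwise (· < ·) ∧ s.2 ∈ S.G I ∧ ∀ i ∈ s.1, (i : ℕ) + 1 < maxIdx s.2

/-- The value of the differential `D` of the big complex `K_•(I)` on the symbol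
`e(σ;u)`:
`D e(σ;u) = Σ_r (−1)^r e(σ_r;u) C(x_{σ_r}*u, x_{i_r})⁻¹ x_{i_r}
          − Σ_r (−1)^r e(σ_r;u_r) C(x_{σ_r}, y_r)⁻¹ y_r`,
where `u_r = g(x_{i_r} * u)` and `y_r = (x_{i_r} * u)/u_r`. -/
noncomputable def Dsym (S : SkewPoly k R n) (g : NExp n → NExp n) (s : EKSym n) :
    EKSym n →₀ R :=
  ∑ r : Fin s.1.length,
    ((-1 : k) ^ ((r : ℕ) + 1)) •
      (Finsupp.single (s.1.eraseIdx (r : ℕ), s.2)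
          ((((S.C (zc (listMon (s.1.eraseIdx (r : ℕ)) + s.2))
              (Finsupp.single (s.1.get r) (1 : ℤ)))⁻¹ : kˣ) : k) •
            S.mon (Finsupp.single (s.1.get r) 1))
       - Finsupp.single (s.1.eraseIdx (r : ℕ), g (Finsupp.single (s.1.get r) 1 + s.2))
          ((((S.C (zc (listMon (s.1.eraseIdx (r : ℕ))))
              (zc (Finsupp.single (s.1.get r) 1 + s.2
                    - g (Finsupp.single (s.1.get r) 1 + s.2))))⁻¹ : kˣ) : k) •
            S.mon (Finsupp.single (s.1.get r) 1 + s.2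
                    - g (Finsupp.single (s.1.get r) 1 + s.2))))

/-- The differential `D : K_•(I) → K_•(I)` extended right-`R`-linearly. -/
noncomputable def Dfun (S : SkewPoly k R n) (g : NExp n → NExp n)
    (f : EKSym n →₀ R) : EKSym n →₀ R :=
  f.sum fun s r => rmul (Dsym S g s) r

open scoped Classical in
/-- The value of the Eliahou–Kervaire differential `d` of `L_•(I)` on `e(σ;u)`:
as for `D`, but the second sum is restricted to `A(σ;u)`, i.e. to those `r` for
which `e(σ_r;u_r)` is admissible. -/
noncomputable def dsym (S : SkewPoly k R n) (I : Submodule Rᵐᵒᵖ R)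
    (g : NExp n → NExp n) (s : EKSym n) : EKSym n →₀ R :=
  ∑ r : Fin s.1.length,
    ((-1 : k) ^ ((r : ℕ) + 1)) •
      (Finsupp.single (s.1.eraseIdx (r : ℕ), s.2)
          ((((S.C (zc (listMon (s.1.eraseIdx (r : ℕ)) + s.2))
              (Finsupp.single (s.1.get r) (1 : ℤ)))⁻¹ : kˣ) : k) •
            S.mon (Finsupp.single (s.1.get r) 1))
       - if Adm S I (s.1.eraseIdx (r : ℕ), g (Finsupp.single (s.1.get r) 1 + s.2)) then
          Finsupp.single (s.1.eraseIdx (r : ℕ), g (Finsupp.single (s.1.get r) 1 + s.2))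
          ((((S.C (zc (listMon (s.1.eraseIdx (r : ℕ))))
              (zc (Finsupp.single (s.1.get r) 1 + s.2
                    - g (Finsupp.single (s.1.get r) 1 + s.2))))⁻¹ : kˣ) : k) •
            S.mon (Finsupp.single (s.1.get r) 1 + s.2
                    - g (Finsupp.single (s.1.get r) 1 + s.2)))
         else 0)

/-- The Eliahou–Kervaire differential `d : L_•(I) → L_•(I)` extended
right-`R`-linearly. -/
noncomputable def dfun (S : SkewPoly k R n) (I : Submodule Rᵐᵒᵖ R)
    (g : NExp n → NExp n) (f : EKSym n →₀ R) : EKSym n →₀ R :=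
  f.sum fun s r => rmul (dsym S I g s) r

open scoped Classical in
/-- The augmentation `ε : L_0(I) → R`, `e(∅;u) ↦ u`. -/
noncomputable def epsfun (S : SkewPoly k R n) (f : EKSym n →₀ R) : R :=
  f.sum fun s r => if s.1 = [] then S.mon s.2 * r else 0

/-- Membership in the subcomplex `J`: the last index satisfies `i_q ≥ max(u)`. -/
def JSym {n : ℕ} (s : EKSym n) : Prop :=
  ∃ m : Fin n, s.1.getLast? = some m ∧ maxIdx s.2 ≤ (m : ℕ) + 1

/-- Two integer exponent vectors have the same `G`-degree. -/
def GdegEq (S : SkewPoly k R n) (a b : ZExp n) : Prop := ∀ c, S.chi a c = S.chi b c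

end Complex

namespace EKAux
open Finsupp

section ZcLemmas
variable {n : ℕ}

lemma zc_apply (a : NExp n) (i : Fin n) : zc a i = (a i : ℤ) := Finsupp.mapRange_apply

lemma zc_add (a b : NExp n) : zc (a + b) = zc a + zc b := by
  ext i; simp [zc_apply]

lemma zc_single (i : Fin n) : zc (Finsupp.single i 1) = Finsupp.single i (1 : ℤ) := by
  ext j; rw [zc_apply, Finsupp.single_apply, Finsupp.single_apply]; split <;> simp

lemma zc_support (a : NExp n) : (zc a).support = a.support := by
  ext i; simp [Finsupp.mem_support_iff, zc_apply]

lemma zc_sub_add (v w : NExp n) (h : v ≤ w) : zc (w - v) = zc w - zc v := by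
  ext i
  have hi : v i ≤ w i := (Finsupp.le_def.mp h) i
  simp only [zc_apply, Finsupp.tsub_apply, Finsupp.sub_apply]
  omega

lemma mem_support_le_maxIdx {a : NExp n} {i : Fin n} (h : i ∈ a.support) :
    (i : ℕ) + 1 ≤ maxIdx a := Finset.le_sup (f := fun i : Fin n => (i : ℕ) + 1) h

end ZcLemmas

section CLemmas
variable {k R : Type*} [CommRing k] [Ring R] [Algebra k R] {n : ℕ}
variable (S : SkewPoly k R n)

lemma C_zero_left (c : ZExp n) : S.C 0 c = 1 := by
  have h := S.C_add_left 0 0 c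
  rw [add_zero] at h
  have : S.C 0 c * 1 = S.C 0 c * S.C 0 c := by rw [mul_one, ← h]
  exact (mul_left_cancel this).symm

lemma C_zero_right (c : ZExp n) : S.C c 0 = 1 := by
  have h := S.C_add_right c 0 0
  rw [add_zero] at h
  have : S.C c 0 * 1 = S.C c 0 * S.C c 0 := by rw [mul_one, ← h]
  exact (mul_left_cancel this).symm

lemma C_sub_left (a b c : ZExp n) : S.C (a - b) c = S.C a c * (S.C b c)⁻¹ := by
  have h := S.C_add_left (a - b) b c
  rw [sub_add_cancel] at h
  rw [h]; group

lemma C_sub_right (a b c : ZExp n) : S.C a (b - c) = S.C a b * (S.C a c)⁻¹ := by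
  have h := S.C_add_right a (b - c) c
  rw [sub_add_cancel] at h
  rw [h]; group

lemma C_zpow_left (i : Fin n) (c : ZExp n) (m : ℤ) :
    S.C (Finsupp.single i m) c = S.C (Finsupp.single i 1) c ^ m := by
  induction m using Int.induction_on with
  | zero => simp [C_zero_left]
  | succ m ih =>
    rw [show ((m:ℤ)+1) = (m:ℤ) + 1 from rfl, Finsupp.single_add, S.C_add_left, ih, zpow_add_one]
  | pred m ih =>
    rw [show (-(m:ℤ)-1) = (-(m:ℤ)) + (-1) from by ring, Finsupp.single_add, S.C_add_left, ih,
      zpow_add]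
    congr 1
    rw [zpow_neg_one]
    have h := S.C_add_left (Finsupp.single i 1) (Finsupp.single i (-1)) c
    rw [← Finsupp.single_add] at h
    simp only [add_neg_cancel, Finsupp.single_zero] at h
    rw [C_zero_left] at h
    exact eq_inv_of_mul_eq_one_right h.symm

lemma C_zpow_right (c : ZExp n) (i : Fin n) (m : ℤ) :
    S.C c (Finsupp.single i m) = S.C c (Finsupp.single i 1) ^ m := by
  induction m using Int.induction_on with
  | zero => simp [C_zero_right]
  | succ m ih =>
    rw [show ((m:ℤ)+1) = (m:ℤ) + 1 from rfl, Finsupp.single_add, S.C_add_right, ih, zpow_add_one]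
  | pred m ih =>
    rw [show (-(m:ℤ)-1) = (-(m:ℤ)) + (-1) from by ring, Finsupp.single_add, S.C_add_right, ih,
      zpow_add]
    congr 1
    rw [zpow_neg_one]
    have h := S.C_add_right c (Finsupp.single i 1) (Finsupp.single i (-1))
    rw [← Finsupp.single_add] at h
    simp only [add_neg_cancel, Finsupp.single_zero] at h
    rw [C_zero_right] at h
    exact eq_inv_of_mul_eq_one_right h.symm

lemma C_one_single (i : Fin n) (b : ZExp n)
    (h : ∀ j ∈ b.support, ¬ (j < i)) : S.C (Finsupp.single i 1) b = 1 := by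
  induction b using Finsupp.induction with
  | zero => exact C_zero_right S _
  | single_add j l f hjf hl ih =>
    rw [S.C_add_right]
    have hsupp : ((Finsupp.single j l + f).support : Finset (Fin n)) =
        {j} ∪ f.support := by
      rw [Finsupp.support_add_eq]
      · rw [Finsupp.support_single_ne_zero _ hl]
      · rw [Finsupp.support_single_ne_zero _ hl, Finset.disjoint_singleton_left]
        exact hjf
    have hj : ¬ (j < i) := h j (by rw [hsupp]; simp)
    have h1 : S.C (Finsupp.single i 1) (Finsupp.single j l) = 1 := by
      rw [C_zpow_right, S.C_single, if_neg hj, one_zpow]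
    rw [h1, one_mul]
    exact ih fun j' hj' => h j' (by rw [hsupp]; simp [hj'])

lemma C_one_of_support (a b : ZExp n)
    (h : ∀ i ∈ a.support, ∀ j ∈ b.support, ¬ (j < i)) : S.C a b = 1 := by
  induction a using Finsupp.induction with
  | zero => exact C_zero_left S _
  | single_add i m f hif hm ih =>
    rw [S.C_add_left]
    have hsupp : ((Finsupp.single i m + f).support : Finset (Fin n)) =
        {i} ∪ f.support := by
      rw [Finsupp.support_add_eq]
      · rw [Finsupp.support_single_ne_zero _ hm]
      · rw [Finsupp.support_single_ne_zero _ hm, Finset.disjoint_singleton_left]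
        exact hif
    have h1 : S.C (Finsupp.single i m) b = 1 := by
      rw [C_zpow_left, C_one_single S i b (h i (by rw [hsupp]; simp)), one_zpow]
    rw [h1, one_mul]
    exact ih fun i' hi' => h i' (by rw [hsupp]; simp [hi'])

lemma C_one_of_maxLeMin (a b : NExp n) (h : maxLeMin a b) :
    S.C (zc a) (zc b) = 1 := by
  apply C_one_of_support
  rw [zc_support, zc_support]
  intro i hi j hj
  have h1 := mem_support_le_maxIdx hi
  have h2 := h j hj
  simp only [Fin.lt_def]
  omega

lemma smul_mon_mul (c₁ c₂ : k) (a b : NExp n) :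
    (c₁ • S.mon a) * (c₂ • S.mon b)
      = (c₁ * (c₂ * ((S.C (zc a) (zc b) : kˣ) : k))) • S.mon (a + b) := by
  rw [smul_mul_assoc, Algebra.mul_smul_comm, S.mon_mul, smul_smul, smul_smul]
  ring_nf

end CLemmas
end EKAux

namespace EKAux
section GLemmas
variable {k R : Type*} [CommRing k] [Ring R] [Algebra k R] {n : ℕ}
variable (S : SkewPoly k R n) (I : Submodule Rᵐᵒᵖ R)

lemma smulk_mem {x : R} (hx : x ∈ I) (c : k) : c • x ∈ I := by
  have h : c • x = MulOpposite.op (algebraMap k R c) • x := by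
    rw [MulOpposite.smul_eq_mul_unop, MulOpposite.unop_op, Algebra.smul_def,
      Algebra.commutes]
  rw [h]
  exact I.smul_mem _ hx

lemma monSet_add {u : NExp n} (hu : u ∈ S.monSet I) (b : NExp n) :
    b + u ∈ S.monSet I := by
  have h1 : S.mon u * S.mon b = ((S.C (zc u) (zc b) : kˣ) : k) • S.mon (u + b) :=
    S.mon_mul u b
  have h2 : S.mon (b + u) = (((S.C (zc u) (zc b))⁻¹ : kˣ) : k) • (S.mon u * S.mon b) := by
    rw [h1, smul_smul, add_comm b u]
    norm_cast
    rw [inv_mul_cancel, Units.val_one, one_smul]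
  show S.mon (b + u) ∈ I
  rw [h2]
  apply smulk_mem
  have : S.mon u * S.mon b = MulOpposite.op (S.mon b) • S.mon u := by
    rw [MulOpposite.smul_eq_mul_unop, MulOpposite.unop_op]
  rw [this]
  exact I.smul_mem _ hu

lemma G_subset_monSet {u : NExp n} (hu : u ∈ S.G I) : u ∈ S.monSet I := hu.1

/-- Uniqueness of the canonical decomposition. -/
lemma decomp_unique {w u u' : NExp n} (hu : u ∈ S.G I) (hu' : u' ∈ S.G I)
    (h1 : u ≤ w) (h2 : u' ≤ w) (h3 : maxLeMin u (w - u)) (h4 : maxLeMin u' (w - u')) :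
    u = u' := by
  have key : u ≤ u' ∨ u' ≤ u := by
    by_contra hc
    push_neg at hc
    obtain ⟨hc1, hc2⟩ := hc
    rw [Finsupp.le_def, not_forall] at hc1 hc2
    obtain ⟨i, hi⟩ := hc1
    obtain ⟨i', hi'⟩ := hc2
    push_neg at hi hi'
    -- hi : u' i < u i ; hi' : u i' < u' i'
    have hiw : u i ≤ w i := Finsupp.le_def.mp h1 i
    have hi'w : u' i' ≤ w i' := Finsupp.le_def.mp h2 i'
    have m1 : (i : ℕ) + 1 ≤ maxIdx u :=
      mem_support_le_maxIdx (Finsupp.mem_support_iff.mpr (by omega))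
    have m2 : maxIdx u' ≤ (i : ℕ) + 1 := by
      apply h4
      rw [Finsupp.mem_support_iff, Finsupp.tsub_apply]
      omega
    have m3 : (i' : ℕ) + 1 ≤ maxIdx u' :=
      mem_support_le_maxIdx (Finsupp.mem_support_iff.mpr (by omega))
    have m4 : maxIdx u ≤ (i' : ℕ) + 1 := by
      apply h3
      rw [Finsupp.mem_support_iff, Finsupp.tsub_apply]
      omega
    have : i = i' := by
      have : (i : ℕ) = (i' : ℕ) := by omega
      exact Fin.ext this
    subst this
    omega
  rcases key with h | h
  · exact hu'.2 u hu.1 h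
  · exact (hu.2 u' hu'.1 h).symm

variable (g : NExp n → NExp n)

lemma g_eq (hg : S.IsDecompFun I g) {w v : NExp n} (hw : w ∈ S.monSet I) (hv : v ∈ S.G I)
    (h1 : v ≤ w) (h2 : maxLeMin v (w - v)) : g w = v := by
  obtain ⟨hg1, hg2, hg3⟩ := hg w hw
  exact decomp_unique S I hg1 hv hg2 h1 hg3 h2

/-- The key commuting property of the decomposition function. -/
lemma g_step (hg : S.IsDecompFun I g) {u : NExp n} (hu : u ∈ S.monSet I) (i : Fin n) :
    g (Finsupp.single i 1 + u) = g (Finsupp.single i 1 + g u) := by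
  obtain ⟨hu₁G, hu₁le, hu₁max⟩ := hg u hu
  set u₁ := g u with hu₁
  have hu₁mon : u₁ ∈ S.monSet I := hu₁G.1
  have hsu₁ : Finsupp.single i 1 + u₁ ∈ S.monSet I := monSet_add S I hu₁mon _
  obtain ⟨hvG, hvle, hvmax⟩ := hg (Finsupp.single i 1 + u₁) hsu₁
  set v := g (Finsupp.single i 1 + u₁) with hv
  -- Subclaim B : maxIdx v ≤ maxIdx u₁
  have hB : maxIdx v ≤ maxIdx u₁ := by
    by_contra hB
    push_neg at hB
    have hvne : v.support.Nonempty := by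
      by_contra he
      rw [Finset.not_nonempty_iff_eq_empty] at he
      have : maxIdx v = 0 := by rw [maxIdx, he, Finset.sup_empty]; rfl
      omega
    obtain ⟨m, hm, hms⟩ := Finset.exists_mem_eq_sup v.support hvne
      (fun i : Fin n => (i : ℕ) + 1)
    have hmv : maxIdx v = (m : ℕ) + 1 := hms
    have hmu₁ : u₁ m = 0 := by
      by_contra hc
      have := mem_support_le_maxIdx (a := u₁) (Finsupp.mem_support_iff.mpr hc)
      omega
    have hvm : 1 ≤ v m := by
      have := Finsupp.mem_support_iff.mp hm
      omega
    have hmle : v m ≤ Finsupp.single i 1 m + u₁ m := by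
      have := Finsupp.le_def.mp hvle m
      simpa using this
    have hmi : m = i := by
      by_contra hc
      rw [Finsupp.single_apply, if_neg (fun h => hc h.symm)] at hmle
      omega
    subst hmi
    -- now show the tail z = 0, hence v = single m 1 + u₁
    have hz : ∀ j, Finsupp.single m 1 j + u₁ j - v j = 0 := by
      intro j
      by_contra hc
      have hjs : j ∈ (Finsupp.single m 1 + u₁ - v).support := by
        rw [Finsupp.mem_support_iff, Finsupp.tsub_apply, Finsupp.add_apply]
        omega
      have hj1 : (m : ℕ) + 1 ≤ (j : ℕ) + 1 := by
        have := hvmax j hjs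
        omega
      have hju₁ : u₁ j = 0 := by
        by_contra hc'
        have := mem_support_le_maxIdx (a := u₁) (Finsupp.mem_support_iff.mpr hc')
        omega
      have hjm : j = m := by
        by_contra hc'
        have hsj : Finsupp.single m 1 j = 0 := by
          rw [Finsupp.single_apply, if_neg (fun h => hc' h.symm)]
        omega
      subst hjm
      have hsm : Finsupp.single j 1 j = 1 := by
        rw [Finsupp.single_apply, if_pos rfl]
      have hmle' : v j ≤ Finsupp.single j 1 j + u₁ j := by
        have := Finsupp.le_def.mp hvle j
        rw [Finsupp.add_apply] at this
        exact this
      omega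
    have hveq : v = Finsupp.single m 1 + u₁ := by
      ext j
      rw [Finsupp.add_apply]
      have h0 := hz j
      have hle := Finsupp.le_def.mp hvle j
      rw [Finsupp.add_apply] at hle
      omega
    have : u₁ = v := hvG.2 u₁ hu₁mon (by rw [hveq]; exact le_add_self)
    have h0 := congrArg (fun f => f m) this
    rw [hveq] at h0
    simp [Finsupp.add_apply, Finsupp.single_apply] at h0
  -- now apply uniqueness for w := single i 1 + u
  symm
  symm
  apply g_eq S I g hg (monSet_add S I hu _) hvG
  · exact le_trans hvle (add_le_add le_rfl hu₁le)
  · intro j hj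
    rw [Finsupp.mem_support_iff, Finsupp.tsub_apply, Finsupp.add_apply] at hj
    by_cases hcase : v j < Finsupp.single i 1 j + u₁ j
    · exact hvmax j (by rw [Finsupp.mem_support_iff, Finsupp.tsub_apply, Finsupp.add_apply]; omega)
    · -- then u j > u₁ j, i.e. j ∈ supp (u - u₁)
      have hle := Finsupp.le_def.mp hvle j
      rw [Finsupp.add_apply] at hle
      have hju : u₁ j < u j := by
        have := Finsupp.le_def.mp hu₁le j
        omega
      have := hu₁max j (by rw [Finsupp.mem_support_iff, Finsupp.tsub_apply]; omega)
      omega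

end GLemmas
end EKAux

namespace EKAux
open Finsupp

section ListLemmas
variable {α : Type*}

lemma eraseIdx_eraseIdx (l : List α) (a b : ℕ) (hab : a < b) :
    (l.eraseIdx a).eraseIdx (b - 1) = (l.eraseIdx b).eraseIdx a := by
  induction l generalizing a b with
  | nil => simp
  | cons x xs ih =>
    cases a with
    | zero =>
      obtain ⟨b', rfl⟩ : ∃ b', b = b' + 1 := ⟨b - 1, by omega⟩
      simp [List.eraseIdx_cons_succ, List.eraseIdx_cons_zero]
    | succ a' =>
      obtain ⟨b', rfl⟩ : ∃ b', b = b' + 1 := ⟨b - 1, by omega⟩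
      have hab' : a' < b' := by omega
      have hb' : 1 ≤ b' := by omega
      obtain ⟨b'', rfl⟩ : ∃ b'', b' = b'' + 1 := ⟨b' - 1, by omega⟩
      simp only [List.eraseIdx_cons_succ]
      rw [show b'' + 2 - 1 = b'' + 1 from by omega]
      simp only [List.eraseIdx_cons_succ]
      exact congrArg (List.cons x) (ih a' (b'' + 1) (by omega))
  
end ListLemmas

section ListMonLemmas
variable {n : ℕ}

lemma listMon_eraseIdx (l : List (Fin n)) (p : ℕ) (h : p < l.length) :
    listMon l = listMon (l.eraseIdx p) + Finsupp.single l[p] 1 := by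
  rw [List.eraseIdx_eq_take_drop_succ]
  conv_lhs => rw [← List.take_append_drop p l]
  rw [← List.getElem_cons_drop h]
  unfold listMon
  rw [List.map_append, List.map_cons, List.sum_append, List.sum_cons,
    List.map_append, List.sum_append]
  abel

end ListMonLemmas

section RmulLemmas
variable {k R : Type*} [CommRing k] [Ring R] [Algebra k R] {n : ℕ}

lemma rmul_apply (f : EKSym n →₀ R) (r : R) (s : EKSym n) :
    rmul f r s = f s * r := Finsupp.mapRange_apply

lemma rmul_zero_right (f : EKSym n →₀ R) : rmul f 0 = 0 := by
  ext s; simp [rmul_apply]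

lemma rmul_one (f : EKSym n →₀ R) : rmul f 1 = f := by
  ext s; simp [rmul_apply]

lemma rmul_add_right (f : EKSym n →₀ R) (r r' : R) :
    rmul f (r + r') = rmul f r + rmul f r' := by
  ext s; simp [rmul_apply, mul_add]

lemma rmul_single (s : EKSym n) (x r : R) :
    rmul (Finsupp.single s x) r = Finsupp.single s (x * r) := Finsupp.mapRange_single

lemma rmul_sub_left (f f' : EKSym n →₀ R) (r : R) :
    rmul (f - f') r = rmul f r - rmul f' r := by
  ext s; simp [rmul_apply, sub_mul]

lemma rmul_smul_left (c : k) (f : EKSym n →₀ R) (r : R) :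
    rmul (c • f) r = c • rmul f r := by
  ext s; simp [rmul_apply, smul_mul_assoc]

lemma rmul_smul_right (c : k) (f : EKSym n →₀ R) (r : R) :
    rmul f (c • r) = c • rmul f r := by
  ext s; simp [rmul_apply, Algebra.mul_smul_comm]

lemma rmul_sum_left {γ : Type*} (s : Finset γ) (F : γ → (EKSym n →₀ R)) (r : R) :
    rmul (∑ x ∈ s, F x) r = ∑ x ∈ s, rmul (F x) r := by
  ext t
  rw [rmul_apply, Finset.sum_apply', Finset.sum_apply', Finset.sum_mul]
  exact Finset.sum_congr rfl fun x _ => (rmul_apply _ _ _).symm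

variable (S : SkewPoly k R n) (g : NExp n → NExp n)

lemma Dfun_single (s : EKSym n) (r : R) :
    Dfun S g (Finsupp.single s r) = rmul (Dsym S g s) r :=
  Finsupp.sum_single_index (rmul_zero_right _)

lemma Dfun_zero : Dfun S g 0 = 0 := Finsupp.sum_zero_index

lemma Dfun_add (f f' : EKSym n →₀ R) :
    Dfun S g (f + f') = Dfun S g f + Dfun S g f' :=
  Finsupp.sum_add_index' (fun _ => rmul_zero_right _) (fun s r r' => rmul_add_right _ _ _)

lemma Dfun_neg (f : EKSym n →₀ R) : Dfun S g (-f) = - Dfun S g f := by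
  have h := Dfun_add S g f (-f)
  rw [add_neg_cancel, Dfun_zero] at h
  exact (neg_eq_of_add_eq_zero_right h.symm).symm

lemma Dfun_sub (f f' : EKSym n →₀ R) :
    Dfun S g (f - f') = Dfun S g f - Dfun S g f' := by
  rw [sub_eq_add_neg, Dfun_add, Dfun_neg, sub_eq_add_neg]

lemma Dfun_smul (c : k) (f : EKSym n →₀ R) :
    Dfun S g (c • f) = c • Dfun S g f := by
  unfold Dfun
  rw [Finsupp.sum_smul_index' (fun i => rmul_zero_right _)]
  rw [Finsupp.smul_sum]
  exact Finset.sum_congr rfl fun s _ => rmul_smul_right _ _ _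

lemma Dfun_sum {γ : Type*} (s : Finset γ) (F : γ → (EKSym n →₀ R)) :
    Dfun S g (∑ x ∈ s, F x) = ∑ x ∈ s, Dfun S g (F x) := by
  classical
  induction s using Finset.induction_on with
  | empty => simp [Dfun_zero]
  | insert _ _ hx ih => rw [Finset.sum_insert hx, Finset.sum_insert hx, Dfun_add, ih]

end RmulLemmas
end EKAux

namespace EKAux
open Finsupp

section DsymEq
variable {k R : Type*} [CommRing k] [Ring R] [Algebra k R] {n : ℕ}

/-- Total version of the first coefficient of `Dsym`. -/
noncomputable def AC (S : SkewPoly k R n) (σ : List (Fin n)) (u : NExp n) (p : ℕ) : R :=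
  if h : p < σ.length then
    ((((S.C (zc (listMon (σ.eraseIdx p) + u)) (Finsupp.single σ[p] (1:ℤ)))⁻¹ : kˣ) : k) •
      S.mon (Finsupp.single σ[p] 1)) else 0

/-- Total version of the second coefficient of `Dsym`. -/
noncomputable def BC (S : SkewPoly k R n) (g : NExp n → NExp n)
    (σ : List (Fin n)) (u : NExp n) (p : ℕ) : R :=
  if h : p < σ.length then
    ((((S.C (zc (listMon (σ.eraseIdx p)))
        (zc (Finsupp.single σ[p] 1 + u - g (Finsupp.single σ[p] 1 + u))))⁻¹ : kˣ) : k) •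
      S.mon (Finsupp.single σ[p] 1 + u - g (Finsupp.single σ[p] 1 + u))) else 0

/-- Total version of the new generator appearing in `Dsym`. -/
noncomputable def gn {n : ℕ} (g : NExp n → NExp n) (σ : List (Fin n)) (u : NExp n) (p : ℕ) :
    NExp n :=
  if h : p < σ.length then g (Finsupp.single σ[p] 1 + u) else 0

lemma Dsym_eq (S : SkewPoly k R n) (g : NExp n → NExp n) (σ : List (Fin n)) (u : NExp n) :
    Dsym S g (σ, u) = ∑ p ∈ Finset.range σ.length,
      ((-1:k) ^ (p+1)) • (Finsupp.single (σ.eraseIdx p, u) (AC S σ u p)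
        - Finsupp.single (σ.eraseIdx p, gn g σ u p) (BC S g σ u p)) := by
  rw [Dsym]
  rw [← Fin.sum_univ_eq_sum_range (fun p =>
      ((-1:k) ^ (p+1)) • (Finsupp.single (σ.eraseIdx p, u) (AC S σ u p)
        - Finsupp.single (σ.eraseIdx p, gn g σ u p) (BC S g σ u p))) σ.length]
  apply Finset.sum_congr rfl
  intro r _
  simp only [AC, BC, gn, List.get_eq_getElem, dif_pos r.isLt]

end DsymEq
end EKAux

namespace EKAux
open Finsupp

section BrDef
variable {k R : Type*} [CommRing k] [Ring R] [Algebra k R] {n : ℕ}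

/-- One summand (without sign) of `D ∘ D` applied to `e(σ;u)`. -/
noncomputable def Br (S : SkewPoly k R n) (g : NExp n → NExp n)
    (σ : List (Fin n)) (u : NExp n) (p t : ℕ) : EKSym n →₀ R :=
  (Finsupp.single ((σ.eraseIdx p).eraseIdx t, u)
      (AC S (σ.eraseIdx p) u t * AC S σ u p)
   - Finsupp.single ((σ.eraseIdx p).eraseIdx t, gn g (σ.eraseIdx p) u t)
      (BC S g (σ.eraseIdx p) u t * AC S σ u p))
  - (Finsupp.single ((σ.eraseIdx p).eraseIdx t, gn g σ u p)
      (AC S (σ.eraseIdx p) (gn g σ u p) t * BC S g σ u p)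
   - Finsupp.single ((σ.eraseIdx p).eraseIdx t, gn g (σ.eraseIdx p) (gn g σ u p) t)
      (BC S g (σ.eraseIdx p) (gn g σ u p) t * BC S g σ u p))

lemma DD_eq (S : SkewPoly k R n) (g : NExp n → NExp n) (σ : List (Fin n)) (u : NExp n) :
    Dfun S g (Dfun S g (Finsupp.single ((σ, u) : EKSym n) (1:R))) =
      ∑ p ∈ Finset.range σ.length, ∑ t ∈ Finset.range (σ.length - 1),
        ((-1:k)^(p+t)) • Br S g σ u p t := by
  rw [Dfun_single, rmul_one, Dsym_eq, Dfun_sum]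
  refine Finset.sum_congr rfl fun p hp => ?_
  rw [Finset.mem_range] at hp
  have hlen : (σ.eraseIdx p).length = σ.length - 1 := by
    rw [List.length_eraseIdx, if_pos hp]
  rw [Dfun_smul, Dfun_sub, Dfun_single, Dfun_single, Dsym_eq, Dsym_eq, hlen,
    rmul_sum_left, rmul_sum_left, ← Finset.sum_sub_distrib, Finset.smul_sum]
  refine Finset.sum_congr rfl fun t ht => ?_
  rw [rmul_smul_left, rmul_smul_left, ← smul_sub, smul_smul, ← pow_add,
    show p + 1 + (t + 1) = (p + t) + 2 by omega, pow_add, neg_one_sq, mul_one,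
    rmul_sub_left, rmul_sub_left, rmul_single, rmul_single, rmul_single, rmul_single, Br]

end BrDef
end EKAux

namespace EKAux
open Finsupp

section Kident
variable {k R : Type*} [CommRing k] [Ring R] [Algebra k R] {n : ℕ}
variable (S : SkewPoly k R n)

lemma kE1 (T U I J : ZExp n) :
    (S.C (T + U) J)⁻¹ * ((S.C ((T + J) + U) I)⁻¹ * S.C J I)
      = (S.C (T + U) I)⁻¹ * ((S.C ((T + I) + U) J)⁻¹ * S.C I J) := by
  apply Additive.ofMul.injective
  simp only [S.C_add_left, mul_inv, ofMul_mul, ofMul_inv]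
  abel

lemma kE2 (T U V Y I J : ZExp n) (h : V + Y = J + U) :
    (S.C T Y)⁻¹ * ((S.C ((T + J) + U) I)⁻¹ * S.C Y I)
      = (S.C (T + V) I)⁻¹ * ((S.C (T + I) Y)⁻¹ * S.C I Y) := by
  have e1 : (T + J) + U = (T + V) + Y := by rw [add_assoc, ← h, ← add_assoc]
  rw [e1]
  apply Additive.ofMul.injective
  simp only [S.C_add_left, mul_inv, ofMul_mul, ofMul_inv]
  abel

lemma kE4 (T I J V₁ V₂ W Z Y₁ Z' Y₂ : ZExp n)
    (hz : W + Z = J + V₁) (hz' : W + Z' = I + V₂) (hE : Z + Y₁ = Z' + Y₂)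
    (c₁ : S.C V₁ Y₁ = 1) (c₂ : S.C V₂ Y₂ = 1)
    (cwz : S.C W Z = 1) (cwz' : S.C W Z' = 1) (cwE : S.C W (Z + Y₁) = 1) :
    (S.C T Z)⁻¹ * ((S.C (T + J) Y₁)⁻¹ * S.C Z Y₁)
      = (S.C T Z')⁻¹ * ((S.C (T + I) Y₂)⁻¹ * S.C Z' Y₂) := by
  have hWY₁ : S.C W Y₁ = 1 := by
    have e : Y₁ = (Z + Y₁) - Z := by abel
    rw [e, C_sub_right, cwE, cwz, one_mul, inv_one]
  have hWY₂ : S.C W Y₂ = 1 := by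
    have e : Y₂ = (Z + Y₁) - Z' := by rw [hE]; abel
    rw [e, C_sub_right, cwE, cwz', one_mul, inv_one]
  have hZY₁ : S.C Z Y₁ = S.C J Y₁ := by
    have e : Z = (J + V₁) - W := by rw [← hz]; abel
    rw [e, C_sub_left, S.C_add_left, c₁, hWY₁, mul_one, inv_one, mul_one]
  have hZY₂ : S.C Z' Y₂ = S.C I Y₂ := by
    have e : Z' = (I + V₂) - W := by rw [← hz']; abel
    rw [e, C_sub_left, S.C_add_left, c₂, hWY₂, mul_one, inv_one, mul_one]
  have htz : S.C T Z * S.C T Y₁ = S.C T Z' * S.C T Y₂ := by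
    rw [← S.C_add_right, ← S.C_add_right, hE]
  rw [hZY₁, hZY₂, S.C_add_left, S.C_add_left, mul_inv, inv_mul_cancel_right,
    mul_inv, inv_mul_cancel_right, ← mul_inv, ← mul_inv, htz]

lemma E1 (L u : NExp n) (i j : Fin n) :
    ((((S.C (zc (L + u)) (Finsupp.single j (1:ℤ)))⁻¹ : kˣ) : k) • S.mon (Finsupp.single j 1))
      * ((((S.C (zc ((L + Finsupp.single j 1) + u)) (Finsupp.single i (1:ℤ)))⁻¹ : kˣ) : k) •
          S.mon (Finsupp.single i 1))
    = ((((S.C (zc (L + u)) (Finsupp.single i (1:ℤ)))⁻¹ : kˣ) : k) • S.mon (Finsupp.single i 1))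
      * ((((S.C (zc ((L + Finsupp.single i 1) + u)) (Finsupp.single j (1:ℤ)))⁻¹ : kˣ) : k) •
          S.mon (Finsupp.single j 1)) := by
  rw [smul_mon_mul, smul_mon_mul,
    add_comm (Finsupp.single j (1:ℕ)) (Finsupp.single i (1:ℕ))]
  congr 1
  simp only [zc_add, zc_single]
  exact_mod_cast kE1 S (zc L) (zc u) (Finsupp.single i 1) (Finsupp.single j 1)

lemma E2 (L u v y : NExp n) (i j : Fin n) (h : v + y = Finsupp.single j 1 + u) :
    ((((S.C (zc L) (zc y))⁻¹ : kˣ) : k) • S.mon y)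
      * ((((S.C (zc ((L + Finsupp.single j 1) + u)) (Finsupp.single i (1:ℤ)))⁻¹ : kˣ) : k) •
          S.mon (Finsupp.single i 1))
    = ((((S.C (zc (L + v)) (Finsupp.single i (1:ℤ)))⁻¹ : kˣ) : k) • S.mon (Finsupp.single i 1))
      * ((((S.C (zc (L + Finsupp.single i 1)) (zc y))⁻¹ : kˣ) : k) • S.mon y) := by
  rw [smul_mon_mul, smul_mon_mul, add_comm y (Finsupp.single i (1:ℕ))]
  congr 1
  have hz : zc v + zc y = Finsupp.single j 1 + zc u := by
    rw [← zc_add, h, zc_add, zc_single]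
  simp only [zc_add, zc_single]
  exact_mod_cast kE2 S (zc L) (zc u) (zc v) (zc y) (Finsupp.single i 1) (Finsupp.single j 1) hz

lemma E4 (L u₁ u₂ w y₁ y₂ z z' : NExp n) (i j : Fin n)
    (hz : w + z = Finsupp.single j 1 + u₁) (hz' : w + z' = Finsupp.single i 1 + u₂)
    (hE : z + y₁ = z' + y₂)
    (c₁ : S.C (zc u₁) (zc y₁) = 1) (c₂ : S.C (zc u₂) (zc y₂) = 1)
    (cwz : S.C (zc w) (zc z) = 1) (cwz' : S.C (zc w) (zc z') = 1)
    (cwE : S.C (zc w) (zc (z + y₁)) = 1) :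
    ((((S.C (zc L) (zc z))⁻¹ : kˣ) : k) • S.mon z)
      * ((((S.C (zc (L + Finsupp.single j 1)) (zc y₁))⁻¹ : kˣ) : k) • S.mon y₁)
    = ((((S.C (zc L) (zc z'))⁻¹ : kˣ) : k) • S.mon z')
      * ((((S.C (zc (L + Finsupp.single i 1)) (zc y₂))⁻¹ : kˣ) : k) • S.mon y₂) := by
  rw [smul_mon_mul, smul_mon_mul, hE]
  congr 1
  have hz1 : zc w + zc z = Finsupp.single j 1 + zc u₁ := by
    rw [← zc_add, hz, zc_add, zc_single]
  have hz2 : zc w + zc z' = Finsupp.single i 1 + zc u₂ := by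
    rw [← zc_add, hz', zc_add, zc_single]
  have hE' : zc z + zc y₁ = zc z' + zc y₂ := by
    rw [← zc_add, ← zc_add, hE]
  have cwE' : S.C (zc w) (zc z + zc y₁) = 1 := by rw [← zc_add]; exact cwE
  simp only [zc_add, zc_single]
  exact_mod_cast kE4 S (zc L) (Finsupp.single i 1) (Finsupp.single j 1)
    (zc u₁) (zc u₂) (zc w) (zc z) (zc y₁) (zc z') (zc y₂) hz1 hz2 hE' c₁ c₂ cwz cwz' cwE'

variable (I : Submodule Rᵐᵒᵖ R) (g : NExp n → NExp n)

lemma g_add_sub (hg : S.IsDecompFun I g) {w : NExp n} (hw : w ∈ S.monSet I) :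
    g w + (w - g w) = w := by
  have hle := (hg w hw).2.1
  ext c
  have := Finsupp.le_def.mp hle c
  rw [Finsupp.add_apply, Finsupp.tsub_apply]
  omega

end Kident
end EKAux

namespace EKAux
open Finsupp

section BrEqSec
variable {k R : Type*} [CommRing k] [Ring R] [Algebra k R] {n : ℕ}
variable (S : SkewPoly k R n) (I : Submodule Rᵐᵒᵖ R) (g : NExp n → NExp n)

lemma getElem_congr' {α : Type*} (l : List α) {a b : ℕ} (hab : a = b)
    {ha : a < l.length} : l[a] = l[b]'(hab ▸ ha) := by subst hab; rfl

lemma Br_eq (hg : S.IsDecompFun I g) {u : NExp n} (hu : u ∈ S.G I)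
    (σ : List (Fin n)) (p₁ p₂ : ℕ) (h12 : p₁ < p₂) (h2 : p₂ < σ.length) :
    Br S g σ u p₁ (p₂ - 1) = Br S g σ u p₂ p₁ := by
  have h1 : p₁ < σ.length := lt_trans h12 h2
  have hlen1 : (σ.eraseIdx p₁).length = σ.length - 1 := by
    rw [List.length_eraseIdx, if_pos h1]
  have hlen2 : (σ.eraseIdx p₂).length = σ.length - 1 := by
    rw [List.length_eraseIdx, if_pos h2]
  have ht : p₂ - 1 < (σ.eraseIdx p₁).length := by rw [hlen1]; omega
  have hp12 : p₁ < (σ.eraseIdx p₂).length := by rw [hlen2]; omega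
  have e1 : (σ.eraseIdx p₁)[p₂ - 1]'ht = σ[p₂]'h2 := by
    rw [List.getElem_eraseIdx, dif_neg (by omega)]
    exact getElem_congr' σ (by omega)
  have e2 : (σ.eraseIdx p₂)[p₁]'hp12 = σ[p₁]'h1 := by
    rw [List.getElem_eraseIdx, dif_pos h12]
  have e3 : (σ.eraseIdx p₂).eraseIdx p₁ = (σ.eraseIdx p₁).eraseIdx (p₂ - 1) :=
    (eraseIdx_eraseIdx σ p₁ p₂ h12).symm
  have lm1 : listMon (σ.eraseIdx p₁)
      = listMon ((σ.eraseIdx p₁).eraseIdx (p₂ - 1)) + Finsupp.single (σ[p₂]'h2) 1 := by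
    rw [← e1]; exact listMon_eraseIdx _ _ ht
  have lm2 : listMon (σ.eraseIdx p₂)
      = listMon ((σ.eraseIdx p₁).eraseIdx (p₂ - 1)) + Finsupp.single (σ[p₁]'h1) 1 := by
    rw [← e3, ← e2]; exact listMon_eraseIdx _ _ hp12
  have humon : u ∈ S.monSet I := hu.1
  have hiu : Finsupp.single (σ[p₁]'h1) 1 + u ∈ S.monSet I := monSet_add S I humon _
  have hju : Finsupp.single (σ[p₂]'h2) 1 + u ∈ S.monSet I := monSet_add S I humon _
  have hu₁mon : g (Finsupp.single (σ[p₁]'h1) 1 + u) ∈ S.monSet I := ((hg _ hiu).1).1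
  have hu₂mon : g (Finsupp.single (σ[p₂]'h2) 1 + u) ∈ S.monSet I := ((hg _ hju).1).1
  have hju₁ : Finsupp.single (σ[p₂]'h2) 1 + g (Finsupp.single (σ[p₁]'h1) 1 + u) ∈ S.monSet I :=
    monSet_add S I hu₁mon _
  have hiu₂ : Finsupp.single (σ[p₁]'h1) 1 + g (Finsupp.single (σ[p₂]'h2) 1 + u) ∈ S.monSet I :=
    monSet_add S I hu₂mon _
  have hgstep : g (Finsupp.single (σ[p₁]'h1) 1 + g (Finsupp.single (σ[p₂]'h2) 1 + u))
      = g (Finsupp.single (σ[p₂]'h2) 1 + g (Finsupp.single (σ[p₁]'h1) 1 + u)) := by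
    rw [← g_step S I g hg hju (σ[p₁]'h1), ← g_step S I g hg hiu (σ[p₂]'h2), add_left_comm]
  have hyp1 : g (Finsupp.single (σ[p₁]'h1) 1 + u)
      + (Finsupp.single (σ[p₁]'h1) 1 + u - g (Finsupp.single (σ[p₁]'h1) 1 + u))
      = Finsupp.single (σ[p₁]'h1) 1 + u := g_add_sub S I g hg hiu
  have hyp2 : g (Finsupp.single (σ[p₂]'h2) 1 + u)
      + (Finsupp.single (σ[p₂]'h2) 1 + u - g (Finsupp.single (σ[p₂]'h2) 1 + u))
      = Finsupp.single (σ[p₂]'h2) 1 + u := g_add_sub S I g hg hju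
  have hzeq : g (Finsupp.single (σ[p₂]'h2) 1 + g (Finsupp.single (σ[p₁]'h1) 1 + u))
      + (Finsupp.single (σ[p₂]'h2) 1 + g (Finsupp.single (σ[p₁]'h1) 1 + u)
          - g (Finsupp.single (σ[p₂]'h2) 1 + g (Finsupp.single (σ[p₁]'h1) 1 + u)))
      = Finsupp.single (σ[p₂]'h2) 1 + g (Finsupp.single (σ[p₁]'h1) 1 + u) :=
    g_add_sub S I g hg hju₁
  have hzeq' : g (Finsupp.single (σ[p₂]'h2) 1 + g (Finsupp.single (σ[p₁]'h1) 1 + u))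
      + (Finsupp.single (σ[p₁]'h1) 1 + g (Finsupp.single (σ[p₂]'h2) 1 + u)
          - g (Finsupp.single (σ[p₂]'h2) 1 + g (Finsupp.single (σ[p₁]'h1) 1 + u)))
      = Finsupp.single (σ[p₁]'h1) 1 + g (Finsupp.single (σ[p₂]'h2) 1 + u) := by
    have h := g_add_sub S I g hg hiu₂
    rwa [hgstep] at h
  have hE : (Finsupp.single (σ[p₂]'h2) 1 + g (Finsupp.single (σ[p₁]'h1) 1 + u)
        - g (Finsupp.single (σ[p₂]'h2) 1 + g (Finsupp.single (σ[p₁]'h1) 1 + u)))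
      + (Finsupp.single (σ[p₁]'h1) 1 + u - g (Finsupp.single (σ[p₁]'h1) 1 + u))
      = (Finsupp.single (σ[p₁]'h1) 1 + g (Finsupp.single (σ[p₂]'h2) 1 + u)
        - g (Finsupp.single (σ[p₂]'h2) 1 + g (Finsupp.single (σ[p₁]'h1) 1 + u)))
      + (Finsupp.single (σ[p₂]'h2) 1 + u - g (Finsupp.single (σ[p₂]'h2) 1 + u)) := by
    ext c
    have a1 := DFunLike.congr_fun hzeq c
    have a2 := DFunLike.congr_fun hzeq' c
    have a3 := DFunLike.congr_fun hyp1 c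
    have a4 := DFunLike.congr_fun hyp2 c
    simp only [Finsupp.add_apply, Finsupp.tsub_apply] at a1 a2 a3 a4 ⊢
    omega
  have c₁ : S.C (zc (g (Finsupp.single (σ[p₁]'h1) 1 + u)))
      (zc (Finsupp.single (σ[p₁]'h1) 1 + u - g (Finsupp.single (σ[p₁]'h1) 1 + u))) = 1 :=
    C_one_of_maxLeMin S _ _ (hg _ hiu).2.2
  have c₂ : S.C (zc (g (Finsupp.single (σ[p₂]'h2) 1 + u)))
      (zc (Finsupp.single (σ[p₂]'h2) 1 + u - g (Finsupp.single (σ[p₂]'h2) 1 + u))) = 1 :=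
    C_one_of_maxLeMin S _ _ (hg _ hju).2.2
  have cwz : S.C (zc (g (Finsupp.single (σ[p₂]'h2) 1 + g (Finsupp.single (σ[p₁]'h1) 1 + u))))
      (zc (Finsupp.single (σ[p₂]'h2) 1 + g (Finsupp.single (σ[p₁]'h1) 1 + u)
        - g (Finsupp.single (σ[p₂]'h2) 1 + g (Finsupp.single (σ[p₁]'h1) 1 + u)))) = 1 :=
    C_one_of_maxLeMin S _ _ (hg _ hju₁).2.2
  have cwz' : S.C (zc (g (Finsupp.single (σ[p₂]'h2) 1 + g (Finsupp.single (σ[p₁]'h1) 1 + u))))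
      (zc (Finsupp.single (σ[p₁]'h1) 1 + g (Finsupp.single (σ[p₂]'h2) 1 + u)
        - g (Finsupp.single (σ[p₂]'h2) 1 + g (Finsupp.single (σ[p₁]'h1) 1 + u)))) = 1 := by
    have h := C_one_of_maxLeMin S _ _ (hg _ hiu₂).2.2
    rwa [hgstep] at h
  have hF : Finsupp.single (σ[p₂]'h2) 1 + (Finsupp.single (σ[p₁]'h1) 1 + u) ∈ S.monSet I :=
    monSet_add S I (monSet_add S I humon _) _
  have hgF : g (Finsupp.single (σ[p₂]'h2) 1 + (Finsupp.single (σ[p₁]'h1) 1 + u))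
      = g (Finsupp.single (σ[p₂]'h2) 1 + g (Finsupp.single (σ[p₁]'h1) 1 + u)) :=
    g_step S I g hg hiu (σ[p₂]'h2)
  have hzy : (Finsupp.single (σ[p₂]'h2) 1 + g (Finsupp.single (σ[p₁]'h1) 1 + u)
        - g (Finsupp.single (σ[p₂]'h2) 1 + g (Finsupp.single (σ[p₁]'h1) 1 + u)))
      + (Finsupp.single (σ[p₁]'h1) 1 + u - g (Finsupp.single (σ[p₁]'h1) 1 + u))
      = (Finsupp.single (σ[p₂]'h2) 1 + (Finsupp.single (σ[p₁]'h1) 1 + u))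
        - g (Finsupp.single (σ[p₂]'h2) 1 + g (Finsupp.single (σ[p₁]'h1) 1 + u)) := by
    ext c
    have a1 := DFunLike.congr_fun hzeq c
    have a3 := DFunLike.congr_fun hyp1 c
    simp only [Finsupp.add_apply, Finsupp.tsub_apply] at a1 a3 ⊢
    omega
  have cwE : S.C (zc (g (Finsupp.single (σ[p₂]'h2) 1 + g (Finsupp.single (σ[p₁]'h1) 1 + u))))
      (zc ((Finsupp.single (σ[p₂]'h2) 1 + g (Finsupp.single (σ[p₁]'h1) 1 + u)
        - g (Finsupp.single (σ[p₂]'h2) 1 + g (Finsupp.single (σ[p₁]'h1) 1 + u)))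
      + (Finsupp.single (σ[p₁]'h1) 1 + u - g (Finsupp.single (σ[p₁]'h1) 1 + u)))) = 1 := by
    rw [hzy]
    have h := C_one_of_maxLeMin S _ _ (hg _ hF).2.2
    rwa [hgF] at h
  rw [Br, Br]
  simp only [AC, BC, gn, dif_pos ht, dif_pos h1, dif_pos hp12, dif_pos h2, e1, e2, e3,
    lm1, lm2, hgstep]
  rw [E1 S (listMon ((σ.eraseIdx p₁).eraseIdx (p₂ - 1))) u (σ[p₁]'h1) (σ[p₂]'h2)]
  rw [E2 S (listMon ((σ.eraseIdx p₁).eraseIdx (p₂ - 1))) u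
    (g (Finsupp.single (σ[p₂]'h2) 1 + u))
    (Finsupp.single (σ[p₂]'h2) 1 + u - g (Finsupp.single (σ[p₂]'h2) 1 + u))
    (σ[p₁]'h1) (σ[p₂]'h2) hyp2]
  rw [E2 S (listMon ((σ.eraseIdx p₁).eraseIdx (p₂ - 1))) u
    (g (Finsupp.single (σ[p₁]'h1) 1 + u))
    (Finsupp.single (σ[p₁]'h1) 1 + u - g (Finsupp.single (σ[p₁]'h1) 1 + u))
    (σ[p₂]'h2) (σ[p₁]'h1) hyp1]
  rw [E4 S (listMon ((σ.eraseIdx p₁).eraseIdx (p₂ - 1)))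
    (g (Finsupp.single (σ[p₁]'h1) 1 + u)) (g (Finsupp.single (σ[p₂]'h2) 1 + u))
    (g (Finsupp.single (σ[p₂]'h2) 1 + g (Finsupp.single (σ[p₁]'h1) 1 + u)))
    (Finsupp.single (σ[p₁]'h1) 1 + u - g (Finsupp.single (σ[p₁]'h1) 1 + u))
    (Finsupp.single (σ[p₂]'h2) 1 + u - g (Finsupp.single (σ[p₂]'h2) 1 + u))
    (Finsupp.single (σ[p₂]'h2) 1 + g (Finsupp.single (σ[p₁]'h1) 1 + u)
      - g (Finsupp.single (σ[p₂]'h2) 1 + g (Finsupp.single (σ[p₁]'h1) 1 + u)))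
    (Finsupp.single (σ[p₁]'h1) 1 + g (Finsupp.single (σ[p₂]'h2) 1 + u)
      - g (Finsupp.single (σ[p₂]'h2) 1 + g (Finsupp.single (σ[p₁]'h1) 1 + u)))
    (σ[p₁]'h1) (σ[p₂]'h2) hzeq hzeq' hE c₁ c₂ cwz cwz' cwE]
  abel

end BrEqSec
end EKAux

section Statements

open Finsupp

variable {k R : Type*} [CommRing k] [Ring R] [Algebra k R] {n : ℕ}

open EKAux in
theorem stmt4 [IsNoetherianRing k]
    (S : SkewPoly k R n) (I : Submodule Rᵐᵒᵖ R)
    (hmono : S.IsMonomialIdeal I) (hstab : S.IsStable I)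
    (g : NExp n → NExp n) (hg : S.IsDecompFun I g) :
    ∀ (σ : List (Fin n)) (u : NExp n), σ.Pairwise (· ≤ ·) → u ∈ S.G I →
      Dfun S g (Dfun S g (Finsupp.single (σ, u) 1)) = 0 := by
  intro σ u hσ hu
  rw [DD_eq,
    (Finset.sum_product' (Finset.range σ.length) (Finset.range (σ.length - 1))
      (fun p t => ((-1:k)^(p+t)) • Br S g σ u p t)).symm]
  refine Finset.sum_involution
    (fun x _ => if x.2 < x.1 then (x.2, x.1 - 1) else (x.2 + 1, x.1)) ?_ ?_ ?_ ?_
  · rintro ⟨p, t⟩ hx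
    obtain ⟨hp, ht⟩ := Finset.mem_product.mp hx
    rw [Finset.mem_range] at hp ht
    by_cases hc : t < p
    · simp only [if_pos hc]
      have hBr : Br S g σ u t (p - 1) = Br S g σ u p t :=
        Br_eq S I g hg hu σ t p hc hp
      rw [hBr, ← add_smul]
      have hc0 : ((-1:k)^(p+t)) + ((-1:k)^(t+(p-1))) = 0 := by
        have e : p + t = (t + (p-1)) + 1 := by omega
        rw [e, pow_succ]
        ring
      rw [hc0, zero_smul]
    · simp only [if_neg hc]
      have hBr : Br S g σ u p ((t+1) - 1) = Br S g σ u (t+1) p :=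
        Br_eq S I g hg hu σ p (t+1) (by omega) (by omega)
      simp only [Nat.add_sub_cancel] at hBr
      rw [hBr, ← add_smul]
      have hc0 : ((-1:k)^(p+t)) + ((-1:k)^(t+1+p)) = 0 := by
        have e : t + 1 + p = (p + t) + 1 := by omega
        rw [e, pow_succ]
        ring
      rw [hc0, zero_smul]
  · rintro ⟨p, t⟩ hx hne
    by_cases hc : t < p
    · simp only [hc, if_true, ne_eq, Prod.mk.injEq, not_and]
      intro h1
      omega
    · simp only [hc, if_false, ne_eq, Prod.mk.injEq, not_and]
      intro h1
      omega
  · rintro ⟨p, t⟩ hx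
    obtain ⟨hp, ht⟩ := Finset.mem_product.mp hx
    rw [Finset.mem_range] at hp ht
    by_cases hc : t < p
    · simp only [hc, if_true, Finset.mem_product, Finset.mem_range]
      exact ⟨by omega, by omega⟩
    · simp only [hc, if_false, Finset.mem_product, Finset.mem_range]
      exact ⟨by omega, by omega⟩
  · rintro ⟨p, t⟩ hx
    by_cases hc : t < p
    · simp only [hc, if_true]
      have h2 : ¬ (p - 1 < t) := by omega
      simp only [h2, if_false, Prod.mk.injEq]
      exact ⟨by omega, trivial⟩
    · simp only [hc, if_false]
      have h2 : p < t + 1 := by omega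
      simp only [h2, if_true, Prod.mk.injEq]
      exact ⟨trivial, by omega⟩

end Statements
end

section
/- Let k be a field and I a stable monomial ideal in the skew polynomial ring R = k_q[x_1,…,x_n]. Then the skew Eliahou–Kervaire resolution of I is minimal: d(L_q(I)) ⊆ (x_1,…,x_n)·L_{q−1}(I) for all q ≥ 1. -/
open Finsupp

section Statements

open Finsupp

variable {k R : Type*} [CommRing k] [Ring R] [Algebra k R] {n : ℕ}

theorem stmt8 {k R : Type*} [Field k] [Ring R] [Algebra k R] {n : ℕ}
    (S : SkewPoly k R n) (I : Submodule Rᵐᵒᵖ R)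
    (hmono : S.IsMonomialIdeal I) (hstab : S.IsStable I)
    (g : NExp n → NExp n) (hg : S.IsDecompFun I g) :
    ∀ s : EKSym n, Adm S I s → ∀ t : EKSym n,
      S.basis.repr (dsym S I g s t) 0 = 0 := by
  classical
  intro s hs t
  have key : ∀ (a : NExp n), a ≠ 0 → ∀ c : k, S.basis.repr (c • S.mon a) 0 = 0 := by
    intro a ha c
    rw [map_smul, ← S.basis_eq, Module.Basis.repr_self]
    simp [Finsupp.single_apply, ha, Ne.symm ha]
  have hsmul : ∀ (c : k) (x : R), x ∈ I → c • x ∈ I := by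
    intro c x hx
    rw [Algebra.smul_def, Algebra.commutes, ← op_smul_eq_mul]
    exact I.smul_mem _ hx
  have hu : s.2 ∈ S.G I := hs.2.1
  have hne : ∀ i : Fin n,
      Finsupp.single i 1 + s.2 - g (Finsupp.single i 1 + s.2) ≠ 0 := by
    intro i hzero
    have hwI : Finsupp.single i 1 + s.2 ∈ S.monSet I := by
      have h1 : S.mon s.2 * S.mon (Finsupp.single i 1) ∈ I := by
        rw [← op_smul_eq_mul]; exact I.smul_mem _ hu.1
      rw [S.mon_mul] at h1
      have h2 := hsmul ((((S.C (zc s.2) (zc (Finsupp.single i 1)))⁻¹ : kˣ) : k)) _ h1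
      rw [smul_smul, Units.inv_mul, one_smul, add_comm s.2] at h2
      exact h2
    obtain ⟨hG, hle, -⟩ := hg _ hwI
    have heq : g (Finsupp.single i 1 + s.2) = Finsupp.single i 1 + s.2 :=
      le_antisymm hle (tsub_eq_zero_iff_le.mp hzero)
    rw [heq] at hG
    have h3 := hG.2 s.2 hu.1 le_add_self
    have h4 : Finsupp.single i (1 : ℕ) = 0 := by
      have h5 : Finsupp.single i (1 : ℕ) + s.2 = 0 + s.2 := by
        rw [zero_add]; exact h3.symm
      exact add_right_cancel h5
    exact (fun h => one_ne_zero (Finsupp.single_eq_zero.mp h)) h4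
  rw [dsym, Finsupp.finset_sum_apply, map_sum, Finsupp.finset_sum_apply]
  apply Finset.sum_eq_zero
  intro r _
  rw [Finsupp.smul_apply, map_smul, Finsupp.smul_apply, Finsupp.sub_apply, map_sub,
    Finsupp.sub_apply]
  have hA : S.basis.repr
      ((Finsupp.single (s.1.eraseIdx (r : ℕ), s.2)
        ((((S.C (zc (listMon (s.1.eraseIdx (r : ℕ)) + s.2))
            (Finsupp.single (s.1.get r) (1 : ℤ)))⁻¹ : kˣ) : k) •
          S.mon (Finsupp.single (s.1.get r) 1)) : EKSym n →₀ R) t) 0 = 0 := by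
    rw [Finsupp.single_apply]
    split
    · exact key _ (fun h => one_ne_zero (Finsupp.single_eq_zero.mp h)) _
    · simp
  have hB : S.basis.repr
      ((if Adm S I (s.1.eraseIdx (r : ℕ), g (Finsupp.single (s.1.get r) 1 + s.2)) then
          Finsupp.single (s.1.eraseIdx (r : ℕ), g (Finsupp.single (s.1.get r) 1 + s.2))
          ((((S.C (zc (listMon (s.1.eraseIdx (r : ℕ))))
              (zc (Finsupp.single (s.1.get r) 1 + s.2
                    - g (Finsupp.single (s.1.get r) 1 + s.2))))⁻¹ : kˣ) : k) •
            S.mon (Finsupp.single (s.1.get r) 1 + s.2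
                    - g (Finsupp.single (s.1.get r) 1 + s.2)))
        else 0) t) 0 = 0 := by
    split
    · rw [Finsupp.single_apply]
      split
      · exact key _ (hne _) _
      · simp
    · simp
  rw [hA, hB, sub_zero, smul_zero]


end Statements
end

section
/- For all integers n ≥ 1, d ≥ 1 and q ≥ 0, the sum over the monomials of degree d in n variables of binom(max(u) − 1, q) equals binom(d+n−1, d+q) · binom(d+q−1, q); that is, Σ_{a ∈ ℕ^n, a_1+⋯+a_n = d} binom(max(a) − 1, q) = binom(d+n−1, d+q) · binom(d+q−1, q), where max(a) denotes the largest index i with a_i > 0. -/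
open Finset

/-- max index (1-based) of a nonzero coordinate. -/
def msup {n : ℕ} (a : Fin n → ℕ) : ℕ :=
  (Finset.univ.filter fun i : Fin n => a i ≠ 0).sup fun i => (i : ℕ) + 1

lemma sum_AT_cons {M : Type*} [AddCommMonoid M] (n d : ℕ) (f : (Fin (n + 1) → ℕ) → M) :
    ∑ a ∈ Finset.Nat.antidiagonalTuple (n + 1) d, f a
      = ∑ x ∈ Finset.range (d + 1), ∑ b ∈ Finset.Nat.antidiagonalTuple n (d - x),
          f (Fin.cons x b) := by
  rw [← Finset.Nat.sum_antidiagonal_eq_sum_range_succ_mk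
    (fun p : ℕ × ℕ => ∑ b ∈ Finset.Nat.antidiagonalTuple n p.2, f (Fin.cons p.1 b))]
  rw [← Finset.sum_sigma ((Finset.HasAntidiagonal.antidiagonal d))
    (fun p => Finset.Nat.antidiagonalTuple n p.2) (fun p => f (Fin.cons p.1.1 p.2))]
  refine Finset.sum_nbij' (fun a => ⟨(a 0, ∑ i, Fin.tail a i), Fin.tail a⟩)
    (fun p => Fin.cons p.1.1 p.2) ?_ ?_ ?_ ?_ ?_
  · intro a ha
    rw [Finset.Nat.mem_antidiagonalTuple] at ha
    simp only [Finset.mem_sigma, Finset.HasAntidiagonal.mem_antidiagonal,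
      Finset.Nat.mem_antidiagonalTuple]
    refine ⟨?_, trivial⟩
    rw [← ha, Fin.sum_univ_succ]
    rfl
  · intro p hp
    simp only [Finset.mem_sigma, Finset.HasAntidiagonal.mem_antidiagonal,
      Finset.Nat.mem_antidiagonalTuple] at hp ⊢
    rw [Fin.sum_cons, hp.2, hp.1]
  · intro a _
    simp [Fin.cons_self_tail]
  · intro p hp
    simp only [Finset.mem_sigma, Finset.HasAntidiagonal.mem_antidiagonal,
      Finset.Nat.mem_antidiagonalTuple] at hp
    obtain ⟨⟨x, e⟩, b⟩ := p
    simp only at hp ⊢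
    have h1 : Fin.cons (α := fun _ : Fin (n+1) => ℕ) x b 0 = x := rfl
    have h2 : Fin.tail (Fin.cons (α := fun _ : Fin (n+1) => ℕ) x b) = b := rfl
    simp only [h1, h2, hp.2]
  · intro a _
    simp [Fin.cons_self_tail]

lemma msup_cons_pos {n : ℕ} (x : ℕ) (b : Fin n → ℕ) (hb : ∃ i, b i ≠ 0) :
    msup (Fin.cons x b) = msup b + 1 := by
  obtain ⟨j, hj⟩ := hb
  unfold msup
  apply le_antisymm
  · apply Finset.sup_le
    intro i hi
    simp only [Finset.mem_filter, Finset.mem_univ, true_and] at hi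
    revert hi
    refine Fin.cases ?_ ?_ i
    · intro _
      exact Nat.succ_le_succ (Nat.zero_le _)
    · intro k hk
      have hbk : b k ≠ 0 := hk
      have hle : (k : ℕ) + 1 ≤ (Finset.univ.filter fun i : Fin n => b i ≠ 0).sup
          fun i => (i : ℕ) + 1 :=
        Finset.le_sup (f := fun i : Fin n => (i : ℕ) + 1)
          (Finset.mem_filter.mpr ⟨Finset.mem_univ k, hbk⟩)
      simpa using Nat.succ_le_succ hle
  · have hne : (Finset.univ.filter fun i : Fin n => b i ≠ 0).Nonempty :=
      ⟨j, by simp [hj]⟩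
    obtain ⟨j₀, hj₀mem, hj₀⟩ := Finset.exists_mem_eq_sup _ hne fun i : Fin n => (i : ℕ) + 1
    rw [hj₀]
    have : j₀.succ ∈ Finset.univ.filter
        fun i : Fin (n + 1) => (Fin.cons x b : Fin (n+1) → ℕ) i ≠ 0 := by
      simp only [Finset.mem_filter, Finset.mem_univ, true_and, Fin.cons_succ]
      exact (Finset.mem_filter.mp hj₀mem).2
    have h2 := Finset.le_sup (f := fun i : Fin (n + 1) => (i : ℕ) + 1) this
    simpa using h2

lemma msup_cons_zero {n : ℕ} (x : ℕ) (hx : x ≠ 0) :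
    msup (Fin.cons x (0 : Fin n → ℕ)) = 1 := by
  unfold msup
  apply le_antisymm
  · apply Finset.sup_le
    intro i hi
    simp only [Finset.mem_filter, Finset.mem_univ, true_and] at hi
    revert hi
    refine Fin.cases ?_ ?_ i
    · intro _
      exact le_rfl
    · intro k hk
      simp at hk
  · have : (0 : Fin (n + 1)) ∈ Finset.univ.filter
        fun i : Fin (n + 1) => (Fin.cons x (0 : Fin n → ℕ) : Fin (n+1) → ℕ) i ≠ 0 := by
      simp [hx]
    simpa using Finset.le_sup (f := fun i : Fin (n + 1) => (i : ℕ) + 1) this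

lemma hockey (m : ℕ) : ∀ d : ℕ, ∑ x ∈ Finset.range d, (x + m).choose m
    = (d + m).choose (m + 1) := by
  intro d
  induction d with
  | zero => simp [Nat.choose_succ_self]
  | succ d ih =>
      rw [Finset.sum_range_succ, ih]
      have : d + 1 + m = (d + m) + 1 := by ring
      rw [this, Nat.choose_succ_succ' (d + m) m]
      ring

lemma key (n : ℕ) : ∀ (e : ℕ) (G : ℕ → ℕ),
    ∑ a ∈ Finset.Nat.antidiagonalTuple n (e + 1), G (msup a)
      = ∑ m ∈ Finset.range n, (e + m).choose m * G (m + 1) := by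
  induction n with
  | zero => intro e G; simp [Finset.Nat.antidiagonalTuple_zero_succ]
  | succ n ih =>
      intro e G
      rw [sum_AT_cons n (e + 1) (fun a => G (msup a))]
      rw [Finset.sum_range_succ]
      have hlast : ∑ b ∈ Finset.Nat.antidiagonalTuple n (e + 1 - (e + 1)),
          G (msup (Fin.cons (e + 1) b)) = G 1 := by
        simp only [Nat.sub_self, Finset.Nat.antidiagonalTuple_zero_right,
          Finset.sum_singleton]
        rw [msup_cons_zero (e + 1) (Nat.succ_ne_zero e)]
      rw [hlast]
      have hmain : ∀ x ∈ Finset.range (e + 1),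
          ∑ b ∈ Finset.Nat.antidiagonalTuple n (e + 1 - x), G (msup (Fin.cons x b))
            = ∑ m ∈ Finset.range n, (e - x + m).choose m * G (m + 2) := by
        intro x hx
        rw [Finset.mem_range] at hx
        have hx' : e + 1 - x = (e - x) + 1 := by omega
        rw [hx']
        have : ∀ b ∈ Finset.Nat.antidiagonalTuple n (e - x + 1),
            G (msup (Fin.cons x b)) = G (msup b + 1) := by
          intro b hb
          rw [Finset.Nat.mem_antidiagonalTuple] at hb
          have hbne : ∃ i, b i ≠ 0 := by
            by_contra h
            push_neg at h
            simp only [h, Finset.sum_const_zero] at hb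
            omega
          rw [msup_cons_pos x b hbne]
        rw [Finset.sum_congr rfl this, ih (e - x) (fun m => G (m + 1))]
      rw [Finset.sum_congr rfl hmain]
      have hrefl : ∑ x ∈ Finset.range (e + 1),
          ∑ m ∈ Finset.range n, (e - x + m).choose m * G (m + 2)
          = ∑ x ∈ Finset.range (e + 1),
          ∑ m ∈ Finset.range n, (x + m).choose m * G (m + 2) := by
        rw [← Finset.sum_range_reflect
          (fun x => ∑ m ∈ Finset.range n, (x + m).choose m * G (m + 2)) (e + 1)]
        apply Finset.sum_congr rfl
        intro x hx
        rw [Finset.mem_range] at hx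
        have : e + 1 - 1 - x = e - x := by omega
        rw [this]
      rw [hrefl, Finset.sum_comm]
      simp_rw [← Finset.sum_mul, hockey]
      rw [Finset.sum_range_succ' (fun m => (e + m).choose m * G (m + 1)) n]
      simp only [Nat.add_zero, Nat.choose_zero_right, one_mul]
      congr 1
      apply Finset.sum_congr rfl
      intro m _
      have : e + 1 + m = e + (m + 1) := by ring
      rw [this]

lemma trinom (e q : ℕ) : ∀ n : ℕ,
    ∑ m ∈ Finset.range n, (e + m).choose m * m.choose q
      = (e + n).choose (e + 1 + q) * (e + q).choose q := by
  intro n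
  induction n with
  | zero =>
      simp [Nat.choose_eq_zero_of_lt (show e < e + 1 + q by omega)]
  | succ n ih =>
      rw [Finset.sum_range_succ, ih]
      have hpascal : (e + (n + 1)).choose (e + 1 + q)
          = (e + n).choose (e + q) + (e + n).choose (e + 1 + q) := by
        have h1 : e + (n + 1) = (e + n) + 1 := by ring
        have h2 : e + 1 + q = (e + q) + 1 := by ring
        rw [h1, h2, Nat.choose_succ_succ' (e + n) (e + q), ← h2]
      have hkey : (e + n).choose n * n.choose q
          = (e + n).choose (e + q) * (e + q).choose q := by
        rcases le_or_gt q n with hqn | hqn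
        · have h1 : (e + n).choose n * n.choose q
              = (e + n).choose q * (e + n - q).choose (n - q) :=
            Nat.choose_mul hqn
          have h2 : (e + n).choose (e + q) * (e + q).choose q
              = (e + n).choose q * (e + n - q).choose (e + q - q) :=
            Nat.choose_mul (by omega)
          rw [h1, h2]
          congr 1
          have h3 : e + q - q = e := by omega
          rw [h3, ← Nat.choose_symm (show e ≤ e + n - q by omega)]
          congr 1
          omega
        · rw [Nat.choose_eq_zero_of_lt hqn,
            Nat.choose_eq_zero_of_lt (show e + n < e + q by omega)]
          ring_nf
      rw [hpascal, Nat.add_mul]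
      omega

theorem stmt13 (n d q : ℕ) (hn : 1 ≤ n) (hd : 1 ≤ d) :
    (∑ a ∈ Finset.Nat.antidiagonalTuple n d,
        ((((Finset.univ.filter fun i : Fin n => a i ≠ 0).sup
            fun i => (i : ℕ) + 1) - 1).choose q))
      = (d + n - 1).choose (d + q) * (d + q - 1).choose q := by
  obtain ⟨e, rfl⟩ : ∃ e, d = e + 1 := ⟨d - 1, by omega⟩
  have := key n e (fun m => (m - 1).choose q)
  rw [show (∑ a ∈ Finset.Nat.antidiagonalTuple n (e + 1),
      ((((Finset.univ.filter fun i : Fin n => a i ≠ 0).sup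
          fun i => (i : ℕ) + 1) - 1).choose q))
    = ∑ a ∈ Finset.Nat.antidiagonalTuple n (e + 1),
        (fun m => (m - 1).choose q) (msup a) from rfl, this]
  have h2 : ∀ m ∈ Finset.range n, (e + m).choose m * (m + 1 - 1).choose q
      = (e + m).choose m * m.choose q := by
    intro m _
    simp
  rw [Finset.sum_congr rfl h2, trinom e q n]
  congr 1 <;> [congr 1; congr 1] <;> omega
end
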